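/- arXiv:2011.02039 — 7 statements merged into one kernel-verified Lean document; each statement's English description precedes it below -/
import Mathlib

section
/- For every x ∈ (0,1], the value f(x) belongs to the closed interval [0, 1]. -/
open scoped BigOperators

/-- The value `Δ^E_g` of the Engel series with digit sequence `g`
(`g n` is the paper's `g_{n+1}`). -/
noncomputable def engelSum (g : ℕ → ℕ) : ℝ :=
  ∑' n : ℕ, ∏ k ∈ Finset.range (n + 1),
    ((2 : ℝ) + ∑ i ∈ Finset.range (k + 1), (g i : ℝ))⁻¹

/-- The value of the series `r_{g_1} + ∑_{k≥2} r_{g_k} ∏_{i=1}^{k-1} u_{g_i}`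
defining `f` on the digit sequence `g`. -/
noncomputable def fSeries (u r : ℕ → ℝ) (g : ℕ → ℕ) : ℝ :=
  r (g 0) + ∑' k : ℕ, r (g (k + 1)) * ∏ i ∈ Finset.range (k + 1), u (g i)

/-- `rpred r n = r (n-1)`, with the convention `r (-1) = 1`. -/
noncomputable def rpred (r : ℕ → ℝ) (n : ℕ) : ℝ := if n = 0 then 1 else r (n - 1)

lemma key_step (u r : ℕ → ℝ)
    (hr : ∀ n, r n = 1 - ∑ i ∈ Finset.range (n + 1), u i)
    (hr01 : ∀ n, 0 < r n ∧ r n < 1)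
    (a : ℕ) (t : ℝ) (ht : t ∈ Set.Icc (0:ℝ) 1) :
    r a + u a * t ∈ Set.Icc (0:ℝ) 1 := by
  obtain ⟨c, ⟨hc0, hc1⟩, hua⟩ : ∃ c : ℝ, (0 < c ∧ c ≤ 1) ∧ u a = c - r a := by
    cases a with
    | zero =>
      refine ⟨1, ⟨one_pos, le_refl 1⟩, ?_⟩
      have := hr 0
      simp [Finset.sum_range_one] at this
      linarith
    | succ n =>
      refine ⟨r n, ⟨(hr01 n).1, (hr01 n).2.le⟩, ?_⟩
      have h1 := hr n
      have h2 := hr (n + 1)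
      rw [Finset.sum_range_succ] at h2
      linarith
  obtain ⟨hra0, hra1⟩ := hr01 a
  obtain ⟨ht0, ht1⟩ := ht
  constructor
  · nlinarith
  · nlinarith

lemma partial_mem (u r : ℕ → ℝ)
    (hr : ∀ n, r n = 1 - ∑ i ∈ Finset.range (n + 1), u i)
    (hr01 : ∀ n, 0 < r n ∧ r n < 1) :
    ∀ (K : ℕ) (g : ℕ → ℕ),
      (r (g 0) + ∑ k ∈ Finset.range K,
        r (g (k + 1)) * ∏ i ∈ Finset.range (k + 1), u (g i)) ∈ Set.Icc (0:ℝ) 1 := by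
  intro K
  induction K with
  | zero =>
    intro g
    simp only [Finset.range_zero, Finset.sum_empty, add_zero]
    exact ⟨(hr01 _).1.le, (hr01 _).2.le⟩
  | succ K ih =>
    intro g
    have hEq : r (g 0) + ∑ k ∈ Finset.range (K + 1),
        r (g (k + 1)) * ∏ i ∈ Finset.range (k + 1), u (g i)
        = r (g 0) + u (g 0) *
          (r (g 1) + ∑ k ∈ Finset.range K,
            r (g (k + 2)) * ∏ i ∈ Finset.range (k + 1), u (g (i + 1))) := by
      rw [Finset.sum_range_succ']
      have hprod : ∀ k : ℕ, ∏ i ∈ Finset.range (k + 2), u (g i)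
          = (∏ i ∈ Finset.range (k + 1), u (g (i + 1))) * u (g 0) := by
        intro k
        exact Finset.prod_range_succ' (fun i => u (g i)) (k + 1)
      have hsum : ∑ k ∈ Finset.range K,
          r (g (k + 1 + 1)) * ∏ i ∈ Finset.range (k + 1 + 1), u (g i)
          = ∑ k ∈ Finset.range K,
            u (g 0) * (r (g (k + 2)) * ∏ i ∈ Finset.range (k + 1), u (g (i + 1))) := by
        refine Finset.sum_congr rfl fun k _ => ?_
        rw [hprod k]
        ring
      rw [hsum, Finset.prod_range_one]
      rw [← Finset.mul_sum]
      ring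
    rw [hEq]
    exact key_step u r hr hr01 (g 0) _ (ih (fun n => g (n + 1)))

/-- for every x ∈ (0,1], f(x) ∈ [0,1]. -/
theorem stmt1
    (u r : ℕ → ℝ)
    (hu_sum : HasSum u 1)
    (hu_abs : ∀ n, |u n| < 1)
    (hr : ∀ n, r n = 1 - ∑ i ∈ Finset.range (n + 1), u i)
    (hr01 : ∀ n, 0 < r n ∧ r n < 1)
    (G : ℝ → ℕ → ℕ)
    (hG : ∀ x ∈ Set.Ioc (0:ℝ) 1, engelSum (G x) = x)
    (hGuniq : ∀ x ∈ Set.Ioc (0:ℝ) 1, ∀ g : ℕ → ℕ, engelSum g = x → g = G x)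
    (f : ℝ → ℝ)
    (hf : ∀ x ∈ Set.Ioc (0:ℝ) 1, f x = fSeries u r (G x))
    (hf0 : f 0 = 0) :
    ∀ x ∈ Set.Ioc (0:ℝ) 1, f x ∈ Set.Icc (0:ℝ) 1 := by
  intro x hx
  rw [hf x hx]
  set g := G x with hg
  unfold fSeries
  set F : ℕ → ℝ := fun k => r (g (k + 1)) * ∏ i ∈ Finset.range (k + 1), u (g i) with hF
  by_cases hS : Summable F
  · have htend : Filter.Tendsto (fun K => r (g 0) + ∑ k ∈ Finset.range K, F k)
        Filter.atTop (nhds (r (g 0) + ∑' k, F k)) :=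
      Filter.Tendsto.const_add _ hS.hasSum.tendsto_sum_nat
    refine isClosed_Icc.mem_of_tendsto htend ?_
    filter_upwards with K
    exact partial_mem u r hr hr01 K g
  · rw [tsum_eq_zero_of_not_summable hS, add_zero]
    exact ⟨(hr01 _).1.le, (hr01 _).2.le⟩
end

section
/- For every x ∈ (0,1]: if u_{g_1(x)} > 0 then r_{g_1(x)} < f(x) ≤ r_{g_1(x)−1}, and if u_{g_1(x)} ≤ 0 then r_{g_1(x)−1} ≤ f(x) ≤ r_{g_1(x)} (with r_{−1} = 1). -/
open scoped BigOperators

/-- Partial sums of the `fSeries`. -/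
noncomputable def fPartial (u r : ℕ → ℝ) (g : ℕ → ℕ) (N : ℕ) : ℝ :=
  r (g 0) + ∑ k ∈ Finset.range N, r (g (k + 1)) * ∏ i ∈ Finset.range (k + 1), u (g i)

lemma fPartial_succ (u r : ℕ → ℝ) (g : ℕ → ℕ) (N : ℕ) :
    fPartial u r g (N + 1) = r (g 0) + u (g 0) * fPartial u r (fun n => g (n + 1)) N := by
  unfold fPartial
  rw [Finset.sum_range_succ']
  have h1 : ∀ k ∈ Finset.range N,
      r (g (k + 1 + 1)) * ∏ i ∈ Finset.range (k + 1 + 1), u (g i)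
      = u (g 0) * (r (g (k + 1 + 1)) * ∏ i ∈ Finset.range (k + 1), u (g (i + 1))) := by
    intro k _
    rw [Finset.prod_range_succ']
    ring
  rw [Finset.sum_congr rfl h1, Finset.prod_range_one, ← Finset.mul_sum]
  ring

lemma uc_bound (u : ℕ → ℝ) (hu_sum : HasSum u 1) (hu_abs : ∀ n, |u n| < 1) :
    ∃ c : ℝ, 0 ≤ c ∧ c < 1 ∧ ∀ n, |u n| ≤ c := by
  have h0 : Filter.Tendsto u Filter.atTop (nhds 0) := hu_sum.summable.tendsto_atTop_zero
  obtain ⟨N, hN⟩ := Metric.tendsto_atTop.mp h0 (1/2) (by norm_num)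
  have hfin : ∀ M : ℕ, ∃ c : ℝ, 0 ≤ c ∧ c < 1 ∧ ∀ n < M, |u n| ≤ c := by
    intro M
    induction M with
    | zero => exact ⟨0, le_rfl, by norm_num, fun n h => absurd h (Nat.not_lt_zero n)⟩
    | succ M ih =>
      obtain ⟨c, hc0, hc1, hc⟩ := ih
      refine ⟨max c |u M|, le_trans hc0 (le_max_left _ _), max_lt hc1 (hu_abs M), ?_⟩
      intro n hn
      rcases Nat.lt_succ_iff_lt_or_eq.mp hn with h | h
      · exact le_trans (hc n h) (le_max_left _ _)
      · subst h; exact le_max_right _ _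
  obtain ⟨c, hc0, hc1, hc⟩ := hfin N
  refine ⟨max c (1/2), le_trans hc0 (le_max_left _ _), max_lt hc1 (by norm_num), ?_⟩
  intro n
  rcases lt_or_ge n N with h | h
  · exact le_trans (hc n h) (le_max_left _ _)
  · have := hN n h
    rw [Real.dist_eq, sub_zero] at this
    exact le_trans this.le (le_max_right _ _)

lemma fseries_summable (u r : ℕ → ℝ) (c : ℝ) (hc0 : 0 ≤ c) (hc1 : c < 1)
    (hc : ∀ n, |u n| ≤ c) (hr01 : ∀ n, 0 < r n ∧ r n < 1) (g : ℕ → ℕ) :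
    Summable (fun k => r (g (k + 1)) * ∏ i ∈ Finset.range (k + 1), u (g i)) := by
  have hgeo : Summable (fun k : ℕ => c ^ (k + 1)) := by
    simpa [pow_succ, mul_comm] using (summable_geometric_of_lt_one hc0 hc1).mul_left c
  refine Summable.of_norm_bounded hgeo ?_
  intro k
  rw [Real.norm_eq_abs, abs_mul, Finset.abs_prod]
  have h1 : ∏ i ∈ Finset.range (k + 1), |u (g i)| ≤ c ^ (k + 1) := by
    have := Finset.prod_le_prod (s := Finset.range (k + 1)) (g := fun _ => c)
      (fun i _ => abs_nonneg (u (g i))) (fun i _ => hc (g i))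
    simpa using this
  have h2 : |r (g (k + 1))| ≤ 1 := by
    have := hr01 (g (k + 1)); rw [abs_of_pos this.1]; exact this.2.le
  calc |r (g (k + 1))| * ∏ i ∈ Finset.range (k + 1), |u (g i)|
      ≤ 1 * (c ^ (k + 1)) := by
        apply mul_le_mul h2 h1 (Finset.prod_nonneg fun i _ => abs_nonneg _) zero_le_one
    _ = c ^ (k + 1) := one_mul _

lemma fSeries_rec (u r : ℕ → ℝ)
    (hsum : ∀ g : ℕ → ℕ, Summable
      (fun k => r (g (k + 1)) * ∏ i ∈ Finset.range (k + 1), u (g i))) (g : ℕ → ℕ) :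
    fSeries u r g = r (g 0) + u (g 0) * fSeries u r (fun n => g (n + 1)) := by
  unfold fSeries
  rw [Summable.tsum_eq_zero_add (hsum g)]
  have h1 : ∀ k : ℕ,
      r (g (k + 1 + 1)) * ∏ i ∈ Finset.range (k + 1 + 1), u (g i)
      = u (g 0) * (r (g (k + 1 + 1)) * ∏ i ∈ Finset.range (k + 1), u (g (i + 1))) := by
    intro k
    rw [Finset.prod_range_succ']
    ring
  rw [tsum_congr h1, tsum_mul_left, Finset.prod_range_one]
  ring

lemma fPartial_bounds (u r : ℕ → ℝ)
    (hr01 : ∀ n, 0 < r n ∧ r n < 1)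
    (hru : ∀ n, r n + u n = rpred r n)
    (hrp : ∀ n, 0 < rpred r n ∧ rpred r n ≤ 1) :
    ∀ N (g : ℕ → ℕ), 0 < fPartial u r g N ∧ fPartial u r g N ≤ 1 := by
  intro N
  induction N with
  | zero =>
    intro g
    have := hr01 (g 0)
    simp only [fPartial, Finset.range_zero, Finset.sum_empty, add_zero]
    exact ⟨this.1, this.2.le⟩
  | succ N ih =>
    intro g
    rw [fPartial_succ]
    obtain ⟨h1, h2⟩ := ih (fun n => g (n + 1))
    obtain ⟨hr1, hr2⟩ := hr01 (g 0)
    have hru0 := hru (g 0)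
    obtain ⟨hp1, hp2⟩ := hrp (g 0)
    rcases le_or_gt 0 (u (g 0)) with hu | hu
    · constructor
      · nlinarith
      · nlinarith
    · constructor
      · nlinarith
      · nlinarith

/-- if u_{g₁(x)} > 0 then r_{g₁(x)} < f(x) ≤ r_{g₁(x)-1};
if u_{g₁(x)} ≤ 0 then r_{g₁(x)-1} ≤ f(x) ≤ r_{g₁(x)} (with r_{-1} = 1). -/
theorem stmt4
    (u r : ℕ → ℝ)
    (hu_sum : HasSum u 1)
    (hu_abs : ∀ n, |u n| < 1)
    (hr : ∀ n, r n = 1 - ∑ i ∈ Finset.range (n + 1), u i)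
    (hr01 : ∀ n, 0 < r n ∧ r n < 1)
    (G : ℝ → ℕ → ℕ)
    (hG : ∀ x ∈ Set.Ioc (0:ℝ) 1, engelSum (G x) = x)
    (hGuniq : ∀ x ∈ Set.Ioc (0:ℝ) 1, ∀ g : ℕ → ℕ, engelSum g = x → g = G x)
    (f : ℝ → ℝ)
    (hf : ∀ x ∈ Set.Ioc (0:ℝ) 1, f x = fSeries u r (G x))
    (hf0 : f 0 = 0) :
    ∀ x ∈ Set.Ioc (0:ℝ) 1,
      (0 < u (G x 0) → r (G x 0) < f x ∧ f x ≤ rpred r (G x 0)) ∧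
      (u (G x 0) ≤ 0 → rpred r (G x 0) ≤ f x ∧ f x ≤ r (G x 0)) := by
  -- basic facts
  have hru : ∀ n, r n + u n = rpred r n := by
    intro n
    cases n with
    | zero =>
      show r 0 + u 0 = rpred r 0
      rw [rpred]
      norm_num [hr 0, Finset.sum_range_one]
    | succ m =>
      simp only [rpred, Nat.succ_ne_zero, if_false, Nat.succ_sub_one]
      rw [hr (m + 1), hr m, Finset.sum_range_succ]
      ring
  have hrp : ∀ n, 0 < rpred r n ∧ rpred r n ≤ 1 := by
    intro n
    cases n with
    | zero => simp [rpred]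
    | succ m =>
      simp only [rpred, Nat.succ_ne_zero, if_false, Nat.succ_sub_one]
      exact ⟨(hr01 m).1, (hr01 m).2.le⟩
  obtain ⟨c, hc0, hc1, hc⟩ := uc_bound u hu_sum hu_abs
  have hsum : ∀ g : ℕ → ℕ,
      Summable (fun k => r (g (k + 1)) * ∏ i ∈ Finset.range (k + 1), u (g i)) :=
    fseries_summable u r c hc0 hc1 hc hr01
  -- weak bounds on fSeries from partial sums
  have hweak : ∀ g : ℕ → ℕ, 0 ≤ fSeries u r g ∧ fSeries u r g ≤ 1 := by
    intro g
    have hlim : Filter.Tendsto (fun N => fPartial u r g N) Filter.atTop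
        (nhds (fSeries u r g)) := by
      have := (hsum g).hasSum.tendsto_sum_nat
      unfold fSeries fPartial
      exact Filter.Tendsto.const_add _ this
    constructor
    · exact ge_of_tendsto hlim (Filter.Eventually.of_forall
        fun N => (fPartial_bounds u r hr01 hru hrp N g).1.le)
    · exact le_of_tendsto hlim (Filter.Eventually.of_forall
        fun N => (fPartial_bounds u r hr01 hru hrp N g).2)
  -- strong bounds on fSeries
  have hstrong : ∀ g : ℕ → ℕ, 0 < fSeries u r g ∧ fSeries u r g ≤ 1 := by
    intro g
    refine ⟨?_, (hweak g).2⟩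
    rw [fSeries_rec u r hsum g]
    obtain ⟨h1, h2⟩ := hweak (fun n => g (n + 1))
    obtain ⟨hr1, hr2⟩ := hr01 (g 0)
    have hru0 := hru (g 0)
    obtain ⟨hp1, hp2⟩ := hrp (g 0)
    rcases le_or_gt 0 (u (g 0)) with hu | hu
    · nlinarith
    · nlinarith
  intro x hx
  rw [hf x hx, fSeries_rec u r hsum (G x)]
  set g := G x
  obtain ⟨h1, h2⟩ := hstrong (fun n => g (n + 1))
  obtain ⟨hr1, hr2⟩ := hr01 (g 0)
  have hru0 := hru (g 0)
  constructor
  · intro hu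
    constructor
    · nlinarith
    · nlinarith
  · intro hu
    constructor
    · nlinarith
    · nlinarith
end

section
/- The function f (extended by f(0) = 0) is continuous at every point of the open interval (0,1), is right-continuous at the point x = 0, and is left-continuous at the point x = 1 (where f(1) = 1). -/
open scoped BigOperators

namespace Stmt5Aux
open Finset Filter Topology

def q (g : ℕ → ℕ) (n : ℕ) : ℕ := 2 + ∑ i ∈ Finset.range (n+1), g i

noncomputable def Pp (g : ℕ → ℕ) (n : ℕ) : ℝ := ∏ k ∈ Finset.range n, ((q g k : ℝ))⁻¹
noncomputable def P (g : ℕ → ℕ) (n : ℕ) : ℝ := Pp g (n+1)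
noncomputable def S (g : ℕ → ℕ) (n : ℕ) : ℝ := ∑ k ∈ Finset.range n, P g k
noncomputable def lo (g : ℕ → ℕ) (n : ℕ) : ℝ := S g (n+1)
noncomputable def hi (g : ℕ → ℕ) (n : ℕ) : ℝ := S g n + Pp g n * ((q g n : ℝ) - 1)⁻¹

lemma two_le_q (g : ℕ → ℕ) (n : ℕ) : 2 ≤ q g n := Nat.le_add_right _ _

lemma q_mono (g : ℕ → ℕ) {m n : ℕ} (h : m ≤ n) : q g m ≤ q g n := by
  unfold q
  exact Nat.add_le_add_left (Finset.sum_le_sum_of_subset (by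
    exact Finset.range_subset_range.2 (by omega))) _

lemma two_le_qr (g : ℕ → ℕ) (n : ℕ) : (2:ℝ) ≤ (q g n : ℝ) := by
  exact_mod_cast two_le_q g n

lemma qr_pos (g : ℕ → ℕ) (n : ℕ) : (0:ℝ) < (q g n : ℝ) := by linarith [two_le_qr g n]

lemma qinv_pos (g : ℕ → ℕ) (n : ℕ) : (0:ℝ) < ((q g n : ℝ))⁻¹ := inv_pos.2 (qr_pos g n)

lemma qinv_le_half (g : ℕ → ℕ) (n : ℕ) : ((q g n : ℝ))⁻¹ ≤ 2⁻¹ := by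
  apply inv_anti₀ (by norm_num) (two_le_qr g n)

lemma Pp_pos (g : ℕ → ℕ) (n : ℕ) : 0 < Pp g n :=
  Finset.prod_pos fun k _ => qinv_pos g k

lemma P_pos (g : ℕ → ℕ) (n : ℕ) : 0 < P g n := Pp_pos g (n+1)

lemma Pp_succ (g : ℕ → ℕ) (n : ℕ) : Pp g (n+1) = Pp g n * ((q g n : ℝ))⁻¹ :=
  Finset.prod_range_succ _ _

lemma Pp_le (g : ℕ → ℕ) (n : ℕ) : Pp g n ≤ 2⁻¹ ^ n := by
  calc Pp g n ≤ ∏ _k ∈ Finset.range n, (2⁻¹:ℝ) := by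
        apply Finset.prod_le_prod (fun k _ => (qinv_pos g k).le) (fun k _ => qinv_le_half g k)
    _ = 2⁻¹ ^ n := by simp

lemma summable_P (g : ℕ → ℕ) : Summable (P g) := by
  apply Summable.of_nonneg_of_le (fun n => (P_pos g n).le) (fun n => ?_)
    (summable_geometric_of_lt_one (by norm_num) (by norm_num : (2:ℝ)⁻¹ < 1))
  calc P g n ≤ 2⁻¹ ^ (n+1) := Pp_le g (n+1)
    _ ≤ 2⁻¹ ^ n := by
        apply pow_le_pow_of_le_one (by norm_num) (by norm_num)
        omega

lemma engel_eq (g : ℕ → ℕ) : engelSum g = ∑' n, P g n := by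
  unfold engelSum P Pp
  refine tsum_congr fun n => Finset.prod_congr rfl fun k _ => ?_
  congr 1
  push_cast [q]
  ring

lemma P_add (g : ℕ → ℕ) (n k : ℕ) :
    P g (k + n) = Pp g n * ∏ i ∈ Finset.range (k+1), ((q g (n+i) : ℝ))⁻¹ := by
  have : k + n + 1 = n + (k + 1) := by omega
  rw [P, this, Pp, Finset.prod_range_add]
  rfl

lemma q_const_of_tail_zero (g : ℕ → ℕ) {m j : ℕ} (hz : ∀ k, m < k → g k = 0) (hj : m ≤ j) :
    q g j = q g m := by
  unfold q
  congr 1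
  rw [← Finset.sum_subset (Finset.range_subset_range.2 (by omega) : Finset.range (m+1) ⊆ Finset.range (j+1))]
  intro x hx hnx
  simp only [Finset.mem_range] at hx hnx
  exact hz x (by omega)

lemma geom_aux (g : ℕ → ℕ) (n : ℕ) :
    ∑' k : ℕ, ((q g n : ℝ))⁻¹ ^ (k+1) = ((q g n : ℝ) - 1)⁻¹ := by
  have ht0 : (0:ℝ) ≤ ((q g n : ℝ))⁻¹ := (qinv_pos g n).le
  have ht1 : ((q g n : ℝ))⁻¹ < 1 := lt_of_le_of_lt (qinv_le_half g n) (by norm_num)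
  have : ∀ k : ℕ, ((q g n : ℝ))⁻¹ ^ (k+1) = ((q g n : ℝ))⁻¹ ^ k * ((q g n : ℝ))⁻¹ := by
    intro k; rw [pow_succ]
  rw [tsum_congr this, tsum_mul_right, tsum_geometric_of_lt_one ht0 ht1]
  have hq := qr_pos g n
  have hq2 := two_le_qr g n
  have hqne : (q g n : ℝ) ≠ 0 := ne_of_gt hq
  have h : (1:ℝ) - ((q g n : ℝ))⁻¹ = ((q g n : ℝ) - 1)/(q g n : ℝ) := by field_simp
  rw [h, inv_div, div_eq_mul_inv, mul_comm ((q g n:ℝ)) _]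
  rw [mul_assoc, mul_inv_cancel₀ hqne, mul_one]

lemma tail_le (g : ℕ → ℕ) (n : ℕ) :
    ∑' k : ℕ, P g (k + n) ≤ Pp g n * ((q g n : ℝ) - 1)⁻¹ := by
  have hterm : ∀ k : ℕ, P g (k + n) ≤ Pp g n * ((q g n : ℝ))⁻¹ ^ (k+1) := by
    intro k
    rw [P_add]
    apply mul_le_mul_of_nonneg_left _ (Pp_pos g n).le
    calc ∏ i ∈ Finset.range (k+1), ((q g (n+i) : ℝ))⁻¹
        ≤ ∏ _i ∈ Finset.range (k+1), ((q g n : ℝ))⁻¹ := by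
          apply Finset.prod_le_prod (fun i _ => (qinv_pos g _).le)
          intro i _
          exact inv_anti₀ (qr_pos g n) (by exact_mod_cast q_mono g (Nat.le_add_right n i))
      _ = ((q g n : ℝ))⁻¹ ^ (k+1) := by simp
  have hsum1 : Summable (fun k : ℕ => P g (k + n)) := (summable_nat_add_iff n).2 (summable_P g)
  have hsum2 : Summable (fun k : ℕ => Pp g n * ((q g n : ℝ))⁻¹ ^ (k+1)) := by
    have hg : Summable (fun k : ℕ => (Pp g n * ((q g n : ℝ))⁻¹) * ((q g n : ℝ))⁻¹ ^ k) :=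
      (summable_geometric_of_lt_one (qinv_pos g n).le
        (lt_of_le_of_lt (qinv_le_half g n) (by norm_num))).mul_left _
    exact hg.congr (fun k => by rw [pow_succ]; ring)
  calc ∑' k : ℕ, P g (k + n) ≤ ∑' k : ℕ, Pp g n * ((q g n : ℝ))⁻¹ ^ (k+1) :=
        Summable.tsum_le_tsum hterm hsum1 hsum2
    _ = Pp g n * ((q g n : ℝ) - 1)⁻¹ := by rw [tsum_mul_left, geom_aux]

lemma engel_split (g : ℕ → ℕ) (n : ℕ) :
    engelSum g = S g n + ∑' k : ℕ, P g (k + n) := by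
  rw [engel_eq, ← Summable.sum_add_tsum_nat_add n (summable_P g)]
  rfl

lemma engel_le_hi (g : ℕ → ℕ) (n : ℕ) : engelSum g ≤ hi g n := by
  rw [engel_split g n, hi]
  exact add_le_add_right (tail_le g n) _

lemma lo_lt_engel (g : ℕ → ℕ) (n : ℕ) : lo g n < engelSum g := by
  rw [engel_split g (n+1), lo]
  have : (0:ℝ) < ∑' k : ℕ, P g (k + (n+1)) := by
    apply Summable.tsum_pos ((summable_nat_add_iff (n+1)).2 (summable_P g))
      (fun k => (P_pos g _).le) 0 (P_pos g _)
  linarith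

lemma engel_mem (g : ℕ → ℕ) (n : ℕ) : engelSum g ∈ Set.Ioc (lo g n) (hi g n) :=
  ⟨lo_lt_engel g n, engel_le_hi g n⟩


lemma S_mono (g : ℕ → ℕ) {m n : ℕ} (h : m ≤ n) : S g m ≤ S g n := by
  unfold S
  apply Finset.sum_le_sum_of_subset_of_nonneg (Finset.range_subset_range.2 h)
  intro k _ _
  exact (P_pos g k).le

lemma lo_pos (g : ℕ → ℕ) (n : ℕ) : 0 < lo g n := by
  unfold lo S
  apply Finset.sum_pos (fun k _ => P_pos g k)
  exact ⟨0, Finset.mem_range.2 (Nat.succ_pos n)⟩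

lemma lo_lt_hi (g : ℕ → ℕ) (n : ℕ) : lo g n < hi g n := by
  unfold lo hi
  rw [S, Finset.sum_range_succ, ← S]
  apply add_lt_add_right
  rw [P, Pp_succ]
  apply mul_lt_mul_of_pos_left _ (Pp_pos g n)
  apply inv_strictAnti₀ (by linarith [two_le_qr g n])
  linarith [two_le_qr g n]

lemma hi_succ_eq (g : ℕ → ℕ) (n : ℕ) : hi g (n+1) =
    S g n + Pp g n * (((q g n : ℝ))⁻¹ * (1 + ((q g (n+1) : ℝ) - 1)⁻¹)) := by
  unfold hi
  rw [S, Finset.sum_range_succ, ← S, Pp_succ, P, Pp_succ]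
  ring

lemma hi_eq (g : ℕ → ℕ) (n : ℕ) : hi g n =
    S g n + Pp g n * (((q g n : ℝ))⁻¹ * (1 + ((q g n : ℝ) - 1)⁻¹)) := by
  unfold hi
  congr 1
  have hqne : ((q g n : ℝ)) ≠ 0 := ne_of_gt (qr_pos g n)
  have ha1 : ((q g n : ℝ)) - 1 ≠ 0 := by
    have := two_le_qr g n; intro h; rw [sub_eq_zero] at h; linarith
  field_simp
  ring

lemma q_succ (g : ℕ → ℕ) (n : ℕ) : q g (n+1) = q g n + g (n+1) := by
  unfold q
  rw [Finset.sum_range_succ]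
  omega

lemma hi_succ_le (g : ℕ → ℕ) (n : ℕ) : hi g (n+1) ≤ hi g n := by
  rw [hi_succ_eq, hi_eq]
  apply add_le_add_right
  apply mul_le_mul_of_nonneg_left _ (Pp_pos g n).le
  apply mul_le_mul_of_nonneg_left _ (qinv_pos g n).le
  apply add_le_add_right
  apply inv_anti₀ (by linarith [two_le_qr g n])
  have : (q g n : ℝ) ≤ (q g (n+1) : ℝ) := by exact_mod_cast q_mono g (Nat.le_succ n)
  linarith

lemma hi_anti (g : ℕ → ℕ) {m n : ℕ} (h : m ≤ n) : hi g n ≤ hi g m := by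
  induction n with
  | zero => simp_all
  | succ k ih =>
    rcases Nat.lt_or_ge m (k+1) with hlt | hge
    · exact le_trans (hi_succ_le g k) (ih (by omega))
    · have : m = k + 1 := by omega
      simp [this]

lemma hi_strict (g : ℕ → ℕ) (n : ℕ) (hg : g (n+1) ≠ 0) : hi g (n+1) < hi g n := by
  rw [hi_succ_eq, hi_eq]
  apply add_lt_add_right
  apply mul_lt_mul_of_pos_left _ (Pp_pos g n)
  apply mul_lt_mul_of_pos_left _ (qinv_pos g n)
  apply add_lt_add_right
  apply inv_strictAnti₀ (by linarith [two_le_qr g n])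
  have : (q g n : ℝ) < (q g (n+1) : ℝ) := by
    have : q g n < q g (n+1) := by rw [q_succ]; omega
    exact_mod_cast this
  linarith

lemma hi_le_one (g : ℕ → ℕ) (n : ℕ) : hi g n ≤ 1 := by
  refine le_trans (hi_anti g (Nat.zero_le n)) ?_
  unfold hi S Pp
  simp only [Finset.range_zero, Finset.sum_empty, Finset.prod_empty, zero_add, one_mul]
  have h2 := two_le_qr g 0
  have h1 : (1:ℝ) ≤ (q g 0 : ℝ) - 1 := by linarith
  calc ((q g 0 : ℝ) - 1)⁻¹ ≤ 1⁻¹ := inv_anti₀ (by norm_num) h1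
    _ = 1 := by norm_num

lemma interval_subset_unit (g : ℕ → ℕ) (n : ℕ) :
    Set.Ioc (lo g n) (hi g n) ⊆ Set.Ioc (0:ℝ) 1 := by
  intro y hy
  exact ⟨lt_trans (lo_pos g n) hy.1, le_trans hy.2 (hi_le_one g n)⟩


lemma q_congr {g g' : ℕ → ℕ} {n : ℕ} (h : ∀ i ≤ n, g' i = g i) : q g' n = q g n := by
  unfold q
  congr 1
  apply Finset.sum_congr rfl
  intro i hi
  exact h i (by simpa [Nat.lt_succ_iff] using hi)

lemma Pp_congr {g g' : ℕ → ℕ} {n : ℕ} (h : ∀ i < n, g' i = g i) : Pp g' n = Pp g n := by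
  unfold Pp
  apply Finset.prod_congr rfl
  intro k hk
  rw [q_congr (fun i hi => h i (by simp at hk; omega))]

lemma S_congr {g g' : ℕ → ℕ} {n : ℕ} (h : ∀ i < n, g' i = g i) : S g' n = S g n := by
  unfold S
  apply Finset.sum_congr rfl
  intro k hk
  simp only [Finset.mem_range] at hk
  unfold P
  exact Pp_congr (fun i hi => h i (by omega))

lemma sep {g g' : ℕ → ℕ} {n : ℕ} (hS : S g' n = S g n) (hPp : Pp g' n = Pp g n)
    (hq : q g n < q g' n) : hi g' n ≤ lo g n := by
  unfold hi lo
  have hexp : S g (n+1) = S g n + P g n := by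
    unfold S; rw [Finset.sum_range_succ]
  rw [hS, hPp, hexp, P, Pp_succ]
  apply add_le_add_right
  apply mul_le_mul_of_nonneg_left _ (Pp_pos g n).le
  apply inv_anti₀ (qr_pos g n)
  have : (q g n : ℝ) + 1 ≤ (q g' n : ℝ) := by exact_mod_cast hq
  linarith

lemma digits_det {g g' : ℕ → ℕ} {n : ℕ}
    (hmem : engelSum g' ∈ Set.Ioc (lo g n) (hi g n)) : ∀ i ≤ n, g' i = g i := by
  intro i
  induction i using Nat.strong_induction_on with
  | _ i ih =>
    intro hin
    have hpre : ∀ j < i, g' j = g j := fun j hj => ih j hj (le_trans hj.le hin)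
    -- engelSum g' lies in the level-i interval of g
    have hx1 : lo g i < engelSum g' :=
      lt_of_le_of_lt (by unfold lo; exact S_mono g (by omega)) hmem.1
    have hx2 : engelSum g' ≤ hi g i := le_trans hmem.2 (hi_anti g hin)
    have hmem' := engel_mem g' i
    by_contra hne
    have hS : S g' i = S g i := S_congr hpre
    have hPp : Pp g' i = Pp g i := Pp_congr hpre
    have hsum : ∑ j ∈ Finset.range i, g' j = ∑ j ∈ Finset.range i, g j :=
      Finset.sum_congr rfl (fun j hj => hpre j (Finset.mem_range.1 hj))
    have hqd : ∀ {a b : ℕ → ℕ}, (∑ j ∈ Finset.range i, a j = ∑ j ∈ Finset.range i, b j) →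
        a i < b i → q a i < q b i := by
      intro a b hs hab
      unfold q
      rw [Finset.sum_range_succ, Finset.sum_range_succ, hs]
      omega
    rcases Nat.lt_or_ge (g' i) (g i) with hlt | hge
    · -- q g' i < q g i : hi g i ≤ lo g' i, but lo g' i < engelSum g' ≤ hi g i
      have := sep hS.symm hPp.symm (hqd hsum hlt)
      linarith [hmem'.1]
    · have hlt : g i < g' i := by omega
      have := sep hS hPp (hqd hsum.symm hlt)
      linarith [hmem'.2]

lemma engel_hi_of_tail_zero (g : ℕ → ℕ) (m : ℕ) (hz : ∀ k, m < k → g k = 0) :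
    engelSum g = hi g m := by
  rw [engel_split g m, hi]
  congr 1
  have hP : ∀ k : ℕ, P g (k + m) = Pp g m * ((q g m : ℝ))⁻¹ ^ (k+1) := by
    intro k
    rw [P_add]
    congr 1
    calc ∏ i ∈ Finset.range (k+1), ((q g (m+i) : ℝ))⁻¹
        = ∏ _i ∈ Finset.range (k+1), ((q g m : ℝ))⁻¹ := by
          apply Finset.prod_congr rfl
          intro i _
          rw [q_const_of_tail_zero g hz (Nat.le_add_right m i)]
      _ = ((q g m : ℝ))⁻¹ ^ (k+1) := by simp
  rw [tsum_congr hP, tsum_mul_left, geom_aux]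

lemma engel_zero : engelSum (fun _ => 0) = 1 := by
  rw [engel_hi_of_tail_zero (fun _ => 0) 0 (fun k _ => rfl)]
  unfold hi S Pp q
  norm_num


noncomputable def Piu (u : ℕ → ℝ) (g : ℕ → ℕ) (n : ℕ) : ℝ := ∏ i ∈ Finset.range n, u (g i)

noncomputable def T (u r : ℕ → ℝ) (g : ℕ → ℕ) (k : ℕ) : ℝ := r (g (k+1)) * Piu u g (k+1)

noncomputable def Fh (u r : ℕ → ℝ) (g : ℕ → ℕ) (m : ℕ) : ℝ :=
  r (g 0) + ∑ k ∈ Finset.range m, T u r g k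

lemma fSeries_eq (u r : ℕ → ℝ) (g : ℕ → ℕ) :
    fSeries u r g = r (g 0) + ∑' k, T u r g k := rfl

section Fpart

variable {u r : ℕ → ℝ} {c : ℝ}

lemma abs_produ_le (hc0 : 0 ≤ c) (hcb : ∀ n, |u n| ≤ c) (h : ℕ → ℕ) (n : ℕ) :
    |∏ i ∈ Finset.range n, u (h i)| ≤ c ^ n := by
  rw [Finset.abs_prod]
  calc ∏ i ∈ Finset.range n, |u (h i)| ≤ ∏ _i ∈ Finset.range n, c :=
        Finset.prod_le_prod (fun i _ => abs_nonneg _) (fun i _ => hcb _)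
    _ = c ^ n := by simp

lemma abs_Piu_le (hc0 : 0 ≤ c) (hcb : ∀ n, |u n| ≤ c) (g : ℕ → ℕ) (n : ℕ) :
    |Piu u g n| ≤ c ^ n := abs_produ_le hc0 hcb g n

lemma abs_T_le (hc0 : 0 ≤ c) (hcb : ∀ n, |u n| ≤ c) (hr1 : ∀ n, |r n| ≤ 1)
    (g : ℕ → ℕ) (k : ℕ) : |T u r g k| ≤ c ^ (k+1) := by
  unfold T
  rw [abs_mul]
  calc |r (g (k+1))| * |Piu u g (k+1)| ≤ 1 * c ^ (k+1) :=
        mul_le_mul (hr1 _) (abs_Piu_le hc0 hcb g (k+1)) (abs_nonneg _) (by norm_num)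
    _ = c ^ (k+1) := one_mul _

lemma summable_geom_c (hc0 : 0 ≤ c) (hc1 : c < 1) : Summable (fun k : ℕ => c ^ (k+1)) :=
  ((summable_geometric_of_lt_one hc0 hc1).mul_left c).congr (fun k => by rw [pow_succ]; ring)

lemma summable_T (hc0 : 0 ≤ c) (hc1 : c < 1) (hcb : ∀ n, |u n| ≤ c) (hr1 : ∀ n, |r n| ≤ 1)
    (g : ℕ → ℕ) : Summable (T u r g) := by
  apply Summable.of_norm_bounded (summable_geom_c hc0 hc1)
  intro k
  rw [Real.norm_eq_abs]
  exact abs_T_le hc0 hcb hr1 g k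

lemma tsum_abs_le_of_le (f b : ℕ → ℝ) (hb : Summable b) (h : ∀ k, |f k| ≤ b k) :
    |∑' k, f k| ≤ ∑' k, b k := by
  have hfa : Summable fun k => |f k| :=
    Summable.of_nonneg_of_le (fun k => abs_nonneg _) h hb
  calc |∑' k, f k| ≤ ∑' k, |f k| := by
        simpa [Real.norm_eq_abs] using
          norm_tsum_le_tsum_norm (f := f) (by simpa [Real.norm_eq_abs] using hfa)
    _ ≤ ∑' k, b k := Summable.tsum_le_tsum h hfa hb

lemma tsum_geom_c (hc0 : 0 ≤ c) (hc1 : c < 1) (a : ℝ) :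
    ∑' k : ℕ, a * c ^ k = a * (1 - c)⁻¹ := by
  rw [tsum_mul_left, tsum_geometric_of_lt_one hc0 hc1]

lemma tail_T_le (hc0 : 0 ≤ c) (hc1 : c < 1) (hcb : ∀ n, |u n| ≤ c) (hr1 : ∀ n, |r n| ≤ 1)
    (g : ℕ → ℕ) (m : ℕ) : |∑' k, T u r g (k+m)| ≤ c ^ (m+1) * (1 - c)⁻¹ := by
  have hbs : Summable (fun k : ℕ => c ^ (m+1) * c ^ k) :=
    (summable_geometric_of_lt_one hc0 hc1).mul_left _
  refine le_trans (tsum_abs_le_of_le _ _ hbs (fun k => ?_)) (le_of_eq (tsum_geom_c hc0 hc1 _))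
  calc |T u r g (k+m)| ≤ c ^ (k+m+1) := abs_T_le hc0 hcb hr1 g (k+m)
    _ = c ^ (m+1) * c ^ k := by rw [← pow_add]; ring_nf

lemma prefix_close (hc0 : 0 ≤ c) (hc1 : c < 1) (hcb : ∀ n, |u n| ≤ c) (hr1 : ∀ n, |r n| ≤ 1)
    {g g' : ℕ → ℕ} {n : ℕ} (hpre : ∀ i ≤ n, g' i = g i) :
    |fSeries u r g' - fSeries u r g| ≤ 2 * (c ^ (n+1) * (1 - c)⁻¹) := by
  have hT : ∀ k ∈ Finset.range n, T u r g' k = T u r g k := by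
    intro k hk
    simp only [Finset.mem_range] at hk
    unfold T Piu
    rw [hpre (k+1) (by omega)]
    congr 1
    apply Finset.prod_congr rfl
    intro i hi
    simp only [Finset.mem_range] at hi
    rw [hpre i (by omega)]
  have e1 : fSeries u r g' = (r (g 0) + ∑ k ∈ Finset.range n, T u r g k)
      + ∑' k, T u r g' (k+n) := by
    rw [fSeries_eq, ← Summable.sum_add_tsum_nat_add n (summable_T hc0 hc1 hcb hr1 g'),
      hpre 0 (Nat.zero_le n), Finset.sum_congr rfl hT, add_assoc]
  have e2 : fSeries u r g = (r (g 0) + ∑ k ∈ Finset.range n, T u r g k)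
      + ∑' k, T u r g (k+n) := by
    rw [fSeries_eq, ← Summable.sum_add_tsum_nat_add n (summable_T hc0 hc1 hcb hr1 g), add_assoc]
  rw [e1, e2]
  have hb1 := tail_T_le hc0 hc1 hcb hr1 g' n
  have hb2 := tail_T_le hc0 hc1 hcb hr1 g n
  calc |(r (g 0) + ∑ k ∈ Finset.range n, T u r g k) + ∑' k, T u r g' (k+n)
        - ((r (g 0) + ∑ k ∈ Finset.range n, T u r g k) + ∑' k, T u r g (k+n))|
      = |(∑' k, T u r g' (k+n)) - ∑' k, T u r g (k+n)| := by congr 1; ring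
    _ ≤ |∑' k, T u r g' (k+n)| + |∑' k, T u r g (k+n)| := abs_sub _ _
    _ ≤ 2 * (c ^ (n+1) * (1 - c)⁻¹) := by linarith

lemma F_sub_r0 (hc0 : 0 ≤ c) (hc1 : c < 1) (hcb : ∀ n, |u n| ≤ c) (hr1 : ∀ n, |r n| ≤ 1)
    (g : ℕ → ℕ) : |fSeries u r g - r (g 0)| ≤ |u (g 0)| * (1 - c)⁻¹ := by
  rw [fSeries_eq, add_sub_cancel_left]
  have hbs : Summable (fun k : ℕ => |u (g 0)| * c ^ k) :=
    (summable_geometric_of_lt_one hc0 hc1).mul_left _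
  refine le_trans (tsum_abs_le_of_le _ _ hbs (fun k => ?_)) (le_of_eq (tsum_geom_c hc0 hc1 _))
  unfold T Piu
  rw [abs_mul, Finset.prod_range_succ', abs_mul]
  calc |r (g (k+1))| * (|∏ i ∈ Finset.range k, u (g (i+1))| * |u (g 0)|)
      ≤ 1 * (c ^ k * |u (g 0)|) := by
        apply mul_le_mul (hr1 _) _ (by positivity) (by norm_num)
        exact mul_le_mul_of_nonneg_right (abs_produ_le hc0 hcb _ k) (abs_nonneg _)
    _ = |u (g 0)| * c ^ k := by ring

lemma TF (hc0 : 0 ≤ c) (hc1 : c < 1) (hcb : ∀ n, |u n| ≤ c) (hr1 : ∀ n, |r n| ≤ 1)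
    (g : ℕ → ℕ) (m : ℕ) :
    |fSeries u r g - (Fh u r g m + r (g (m+1)) * Piu u g (m+1))|
      ≤ |u (g (m+1))| * (c ^ (m+1) * (1 - c)⁻¹) := by
  have hsum : Summable (fun k : ℕ => T u r g (k+m)) :=
    (summable_nat_add_iff m).2 (summable_T hc0 hc1 hcb hr1 g)
  have e : fSeries u r g = Fh u r g m + ∑' k, T u r g (k+m) := by
    rw [fSeries_eq, ← Summable.sum_add_tsum_nat_add m (summable_T hc0 hc1 hcb hr1 g), ← add_assoc]
    rfl
  have e2 : ∑' k, T u r g (k+m) = T u r g m + ∑' k, T u r g (k+1+m) := by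
    rw [Summable.tsum_eq_zero_add hsum]
    simp
  have hTm : T u r g m = r (g (m+1)) * Piu u g (m+1) := rfl
  have e3 : fSeries u r g - (Fh u r g m + r (g (m+1)) * Piu u g (m+1))
      = ∑' k, T u r g (k+1+m) := by rw [e, e2, hTm]; ring
  rw [e3]
  have hbs : Summable (fun k : ℕ => (|u (g (m+1))| * c ^ (m+1)) * c ^ k) :=
    (summable_geometric_of_lt_one hc0 hc1).mul_left _
  refine le_trans (tsum_abs_le_of_le _ _ hbs (fun k => ?_)) ?_
  · have hsplit : Piu u g (k+1+m+1) = Piu u g (m+1) * u (g (m+1)) *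
        ∏ i ∈ Finset.range k, u (g (m+2+i)) := by
      have hk : k+1+m+1 = (m+2) + k := by omega
      rw [Piu, hk, Finset.prod_range_add, ← Piu]
      congr 1
      rw [Piu, Finset.prod_range_succ]
      rfl
    unfold T
    rw [hsplit]
    rw [abs_mul, abs_mul, abs_mul]
    have h1 : |r (g (k+1+m+1))| ≤ 1 := hr1 _
    have h2 : |Piu u g (m+1)| ≤ c ^ (m+1) := abs_Piu_le hc0 hcb g (m+1)
    have h3 : |∏ i ∈ Finset.range k, u (g (m+2+i))| ≤ c ^ k := abs_produ_le hc0 hcb _ k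
    have h4 : (0:ℝ) ≤ |u (g (m+1))| := abs_nonneg _
    have hX : (0:ℝ) ≤ |Piu u g (m+1)| * |u (g (m+1))| * |∏ i ∈ Finset.range k, u (g (m+2+i))| := by
      positivity
    calc |r (g (k+1+m+1))| * (|Piu u g (m+1)| * |u (g (m+1))| * |∏ i ∈ Finset.range k, u (g (m+2+i))|)
        ≤ 1 * (|Piu u g (m+1)| * |u (g (m+1))| * |∏ i ∈ Finset.range k, u (g (m+2+i))|) :=
          mul_le_mul_of_nonneg_right h1 hX
      _ = |Piu u g (m+1)| * |u (g (m+1))| * |∏ i ∈ Finset.range k, u (g (m+2+i))| := one_mul _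
      _ ≤ c ^ (m+1) * |u (g (m+1))| * c ^ k := by
          apply mul_le_mul _ h3 (abs_nonneg _) (by positivity)
          exact mul_le_mul_of_nonneg_right h2 h4
      _ = |u (g (m+1))| * c ^ (m+1) * c ^ k := by ring
  · rw [tsum_geom_c hc0 hc1]
    ring_nf
    exact le_refl _

lemma F_of_tail_zero (hu0 : |u 0| < 1) (hr0 : r 0 = 1 - u 0)
    (hc0 : 0 ≤ c) (hc1 : c < 1) (hcb : ∀ n, |u n| ≤ c) (hr1 : ∀ n, |r n| ≤ 1)
    {g : ℕ → ℕ} {m : ℕ} (hz : ∀ k, m < k → g k = 0) :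
    fSeries u r g = Fh u r g m + Piu u g (m+1) := by
  have e : fSeries u r g = Fh u r g m + ∑' k, T u r g (k+m) := by
    rw [fSeries_eq, ← Summable.sum_add_tsum_nat_add m (summable_T hc0 hc1 hcb hr1 g), ← add_assoc]
    rfl
  rw [e]
  congr 1
  have hterm : ∀ k : ℕ, T u r g (k+m) = (r 0 * Piu u g (m+1)) * (u 0) ^ k := by
    intro k
    unfold T
    have hg0 : g (k+m+1) = 0 := hz _ (by omega)
    have hsplit : Piu u g (k+m+1) = Piu u g (m+1) * (u 0) ^ k := by
      have hk : k+m+1 = (m+1) + k := by omega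
      rw [Piu, hk, Finset.prod_range_add, ← Piu]
      congr 1
      calc ∏ i ∈ Finset.range k, u (g (m+1+i))
          = ∏ _i ∈ Finset.range k, u 0 := by
            apply Finset.prod_congr rfl
            intro i _
            rw [hz (m+1+i) (by omega)]
        _ = (u 0) ^ k := by simp
    rw [hg0, hsplit]
    ring
  rw [tsum_congr hterm, tsum_mul_left, tsum_geometric_of_abs_lt_one hu0]
  have hne : (1:ℝ) - u 0 ≠ 0 := by
    have h01 := abs_lt.1 hu0
    intro h
    linarith [h01.1, h01.2]
  rw [hr0]
  field_simp

lemma Fh_diff {g g' : ℕ → ℕ} {m : ℕ} (hpre : ∀ i < m, g' i = g i)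
    (hm' : g' m = g m - 1) (hgm : g m ≠ 0)
    (hru : r (g m - 1) - r (g m) = u (g m)) :
    Fh u r g' m = Fh u r g m + Piu u g (m+1) := by
  cases m with
  | zero =>
    unfold Fh Piu
    simp only [Finset.range_zero, Finset.sum_empty, add_zero, zero_add, Finset.prod_range_one]
    rw [hm']
    linarith
  | succ mm =>
    unfold Fh
    rw [Finset.sum_range_succ, Finset.sum_range_succ]
    have h0 : g' 0 = g 0 := hpre 0 (by omega)
    have hTk : ∀ k ∈ Finset.range mm, T u r g' k = T u r g k := by
      intro k hk
      simp only [Finset.mem_range] at hk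
      unfold T Piu
      rw [hpre (k+1) (by omega)]
      congr 1
      exact Finset.prod_congr rfl (fun i hi => by
        simp only [Finset.mem_range] at hi
        rw [hpre i (by omega)])
    rw [h0, Finset.sum_congr rfl hTk]
    have hTm' : T u r g' mm = r (g (mm+1) - 1) * Piu u g (mm+1) := by
      unfold T Piu
      rw [hm']
      congr 1
      exact Finset.prod_congr rfl (fun i hi => by
        simp only [Finset.mem_range] at hi
        rw [hpre i (by omega)])
    have hTm : T u r g mm = r (g (mm+1)) * Piu u g (mm+1) := rfl
    have hPi : Piu u g (mm+1+1) = Piu u g (mm+1) * u (g (mm+1)) := by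
      rw [Piu, Finset.prod_range_succ]
      rfl
    rw [hTm', hTm, hPi, ← hru]
    ring

lemma caseB_est (hc0 : 0 ≤ c) (hc1 : c < 1) (hcb : ∀ n, |u n| ≤ c) (hr1 : ∀ n, |r n| ≤ 1)
    (hu0 : |u 0| < 1) (hr0 : r 0 = 1 - u 0) {g g' : ℕ → ℕ} {m : ℕ}
    (hgm : g m ≠ 0) (hz : ∀ k, m < k → g k = 0) (hpre : ∀ i < m, g' i = g i)
    (hm' : g' m = g m - 1) (hru : r (g m - 1) - r (g m) = u (g m)) :
    |fSeries u r g' - fSeries u r g| ≤ |r (g' (m+1))| + |u (g' (m+1))| * (1 - c)⁻¹ := by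
  have h1 : fSeries u r g = Fh u r g m + Piu u g (m+1) :=
    F_of_tail_zero hu0 hr0 hc0 hc1 hcb hr1 hz
  have h3 : Fh u r g' m = Fh u r g m + Piu u g (m+1) := Fh_diff hpre hm' hgm hru
  have h2 := TF hc0 hc1 hcb hr1 g' m
  have key : fSeries u r g' - fSeries u r g =
      (fSeries u r g' - (Fh u r g' m + r (g' (m+1)) * Piu u g' (m+1)))
        + r (g' (m+1)) * Piu u g' (m+1) := by
    rw [h1, ← h3]; ring
  rw [key]
  have hPi' : |Piu u g' (m+1)| ≤ c ^ (m+1) := abs_Piu_le hc0 hcb g' (m+1)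
  have hpow1 : c ^ (m+1) ≤ 1 := pow_le_one₀ hc0 hc1.le
  have hinv : (0:ℝ) ≤ (1 - c)⁻¹ := by
    apply inv_nonneg.2; linarith
  calc |(fSeries u r g' - (Fh u r g' m + r (g' (m+1)) * Piu u g' (m+1)))
        + r (g' (m+1)) * Piu u g' (m+1)|
      ≤ |fSeries u r g' - (Fh u r g' m + r (g' (m+1)) * Piu u g' (m+1))|
        + |r (g' (m+1)) * Piu u g' (m+1)| := abs_add_le _ _
    _ ≤ |u (g' (m+1))| * (c ^ (m+1) * (1 - c)⁻¹) + |r (g' (m+1))| * c ^ (m+1) := by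
        apply add_le_add h2
        rw [abs_mul]
        exact mul_le_mul_of_nonneg_left hPi' (abs_nonneg _)
    _ ≤ |r (g' (m+1))| + |u (g' (m+1))| * (1 - c)⁻¹ := by
        have ha : (0:ℝ) ≤ |r (g' (m+1))| := abs_nonneg _
        have hb : (0:ℝ) ≤ |u (g' (m+1))| := abs_nonneg _
        have k1 : |r (g' (m+1))| * c ^ (m+1) ≤ |r (g' (m+1))| :=
          mul_le_of_le_one_right ha hpow1
        have k2 : |u (g' (m+1))| * (c ^ (m+1) * (1 - c)⁻¹) ≤ |u (g' (m+1))| * (1 - c)⁻¹ :=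
          mul_le_mul_of_nonneg_left (mul_le_of_le_one_left hinv hpow1) hb
        linarith

end Fpart

lemma exists_c (u : ℕ → ℝ) (hu_abs : ∀ n, |u n| < 1)
    (hu0 : Filter.Tendsto u Filter.atTop (nhds 0)) :
    ∃ c : ℝ, 0 ≤ c ∧ c < 1 ∧ ∀ n, |u n| ≤ c := by
  obtain ⟨N, hN⟩ := Metric.tendsto_atTop.1 hu0 2⁻¹ (by norm_num)
  have hNd : ∀ n ≥ N, |u n| < 2⁻¹ := by
    intro n hn
    have := hN n hn
    rwa [Real.dist_eq, sub_zero] at this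
  have hne : (Finset.range (N+1)).Nonempty := ⟨0, by simp⟩
  refine ⟨(Finset.range (N+1)).sup' hne (fun n => max 2⁻¹ |u n|), ?_, ?_, ?_⟩
  · refine le_trans (by norm_num : (0:ℝ) ≤ max 2⁻¹ |u 0|) ?_
    exact Finset.le_sup' (f := fun n => max 2⁻¹ |u n|) (by simp : 0 ∈ Finset.range (N+1))
  · refine (Finset.sup'_lt_iff hne).2 ?_
    intro n _
    exact max_lt (by norm_num) (hu_abs n)
  · intro n
    rcases le_or_gt n N with h | h
    · refine le_trans (le_max_right 2⁻¹ _) ?_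
      exact Finset.le_sup' (f := fun n => max 2⁻¹ |u n|)
        (by simp only [Finset.mem_range]; omega : n ∈ Finset.range (N+1))
    · refine le_trans (hNd n h.le).le ?_
      refine le_trans (le_max_left 2⁻¹ |u 0|) ?_
      exact Finset.le_sup' (f := fun n => max 2⁻¹ |u n|) (by simp : 0 ∈ Finset.range (N+1))

end Stmt5Aux

open Stmt5Aux Filter

/-- f is continuous on (0,1), right-continuous at 0,
left-continuous at 1, and f(1) = 1. -/
theorem stmt5
    (u r : ℕ → ℝ)
    (hu_sum : HasSum u 1)
    (hu_abs : ∀ n, |u n| < 1)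
    (hr : ∀ n, r n = 1 - ∑ i ∈ Finset.range (n + 1), u i)
    (hr01 : ∀ n, 0 < r n ∧ r n < 1)
    (G : ℝ → ℕ → ℕ)
    (hG : ∀ x ∈ Set.Ioc (0:ℝ) 1, engelSum (G x) = x)
    (hGuniq : ∀ x ∈ Set.Ioc (0:ℝ) 1, ∀ g : ℕ → ℕ, engelSum g = x → g = G x)
    (f : ℝ → ℝ)
    (hf : ∀ x ∈ Set.Ioc (0:ℝ) 1, f x = fSeries u r (G x))
    (hf0 : f 0 = 0) :
    (∀ x ∈ Set.Ioo (0:ℝ) 1, ContinuousAt f x) ∧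
    ContinuousWithinAt f (Set.Ici (0:ℝ)) 0 ∧
    ContinuousWithinAt f (Set.Iic (1:ℝ)) 1 ∧
    f 1 = 1 := by
  have hr1 : ∀ n, |r n| ≤ 1 := fun n => by
    have h := hr01 n
    rw [abs_le]
    constructor <;> linarith [h.1, h.2]
  have hut : Tendsto u atTop (nhds 0) := hu_sum.summable.tendsto_atTop_zero
  obtain ⟨c, hc0, hc1, hcb⟩ := Stmt5Aux.exists_c u hu_abs hut
  have hu0 : |u 0| < 1 := hu_abs 0
  have hr0 : r 0 = 1 - u 0 := by rw [hr 0]; simp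
  have hinvpos : (0:ℝ) < (1 - c)⁻¹ := inv_pos.2 (by linarith)
  have hrt : Tendsto r atTop (nhds 0) := by
    have h1 : Tendsto (fun n => ∑ i ∈ Finset.range (n+1), u i) atTop (nhds 1) :=
      hu_sum.tendsto_sum_nat.comp (tendsto_add_atTop_nat 1)
    have h2 : Tendsto (fun n => 1 - ∑ i ∈ Finset.range (n+1), u i) atTop (nhds (1-1)) :=
      tendsto_const_nhds.sub h1
    simp only [sub_self] at h2
    exact h2.congr (fun n => (hr n).symm)
  have hbt : Tendsto (fun k => |r k| + |u k| * (1-c)⁻¹) atTop (nhds 0) := by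
    have h1 : Tendsto (fun k => |r k|) atTop (nhds |(0:ℝ)|) := hrt.abs
    have h2 : Tendsto (fun k => |u k| * (1-c)⁻¹) atTop (nhds (|(0:ℝ)| * (1-c)⁻¹)) :=
      hut.abs.mul_const _
    have h3 := h1.add h2
    simpa using h3
  have hEt : Tendsto (fun n : ℕ => 2 * (c ^ (n+1) * (1-c)⁻¹)) atTop (nhds 0) := by
    have h1 : Tendsto (fun n : ℕ => c ^ n) atTop (nhds 0) :=
      tendsto_pow_atTop_nhds_zero_of_lt_one hc0 hc1
    have h2 := ((h1.comp (tendsto_add_atTop_nat 1)).mul_const ((1-c)⁻¹)).const_mul 2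
    simpa [Function.comp] using h2
  have pick : ∀ ε > (0:ℝ), ∃ n : ℕ, 2 * (c^(n+1) * (1-c)⁻¹) < ε := by
    intro ε hε
    exact ((hEt.eventually (gt_mem_nhds hε)).exists)
  have pickK : ∀ ε > (0:ℝ), ∃ K₀ : ℕ, ∀ k ≥ K₀, |r k| + |u k| * (1-c)⁻¹ < ε := by
    intro ε hε
    exact Filter.eventually_atTop.1 (hbt.eventually (gt_mem_nhds hε))
  -- x lies in its own cylinders
  have hself : ∀ x, x ∈ Set.Ioc (0:ℝ) 1 → ∀ n,
      x ∈ Set.Ioc (Stmt5Aux.lo (G x) n) (Stmt5Aux.hi (G x) n) := by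
    intro x hx n
    have h := Stmt5Aux.engel_mem (G x) n
    rwa [hG x hx] at h
  -- closeness on a common cylinder
  have key : ∀ x, x ∈ Set.Ioc (0:ℝ) 1 → ∀ n : ℕ, ∀ y,
      y ∈ Set.Ioc (Stmt5Aux.lo (G x) n) (Stmt5Aux.hi (G x) n) →
      |f y - f x| ≤ 2 * (c^(n+1) * (1-c)⁻¹) := by
    intro x hx n y hy
    have hy01 : y ∈ Set.Ioc (0:ℝ) 1 := Stmt5Aux.interval_subset_unit _ n hy
    have hyg : engelSum (G y) = y := hG y hy01
    have hpre : ∀ i ≤ n, (G y) i = (G x) i :=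
      Stmt5Aux.digits_det (by rw [hyg]; exact hy)
    rw [hf y hy01, hf x hx]
    exact Stmt5Aux.prefix_close hc0 hc1 hcb hr1 hpre
  -- left continuity at every point of (0,1]
  have hleft : ∀ x, x ∈ Set.Ioc (0:ℝ) 1 → ContinuousWithinAt f (Set.Iic x) x := by
    intro x hx
    rw [Metric.continuousWithinAt_iff]
    intro ε hε
    obtain ⟨n, hn⟩ := pick ε hε
    refine ⟨x - Stmt5Aux.lo (G x) n, by linarith [(hself x hx n).1], ?_⟩
    intro y hy hdy
    have hyx : y ≤ x := hy
    rw [Real.dist_eq] at hdy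
    have h2 : x - y < x - Stmt5Aux.lo (G x) n := by
      rw [abs_sub_comm, abs_of_nonneg (by linarith)] at hdy
      linarith
    rw [Real.dist_eq]
    apply lt_of_le_of_lt _ hn
    apply key x hx n y
    exact ⟨by linarith, le_trans hyx (hself x hx n).2⟩
  -- right continuity at every point of (0,1)
  have hright : ∀ x, x ∈ Set.Ioo (0:ℝ) 1 → ContinuousWithinAt f (Set.Ici x) x := by
    intro x hx
    have hx01 : x ∈ Set.Ioc (0:ℝ) 1 := ⟨hx.1, hx.2.le⟩
    by_cases hcase : ∃ m, ∀ k, m < k → (G x) k = 0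
    · -- eventually-zero digits : x is a right endpoint
      obtain ⟨m₀, hm₀⟩ := hcase
      have hnz : ∃ j, (G x) j ≠ 0 := by
        by_contra hall
        push_neg at hall
        have hgx0 : G x = fun _ => 0 := funext hall
        have h1 : engelSum (G x) = 1 := by rw [hgx0]; exact Stmt5Aux.engel_zero
        rw [hG x hx01] at h1
        linarith [hx.2]
      obtain ⟨j, hj⟩ := hnz
      have hjm : j ≤ m₀ := by
        by_contra h
        exact hj (hm₀ j (by omega))
      set m := Nat.findGreatest (fun i => (G x) i ≠ 0) m₀ with hmdef
      have hgm : (G x) m ≠ 0 := by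
        have h := Nat.findGreatest_spec (P := fun i => (G x) i ≠ 0) hjm hj
        rwa [← hmdef] at h
      have hz : ∀ k, m < k → (G x) k = 0 := by
        intro k hk
        rcases le_or_gt k m₀ with h | h
        · by_contra hne
          rw [hmdef] at hk
          exact (Nat.findGreatest_is_greatest hk h) hne
        · exact hm₀ k (by omega)
      set D : ℕ → ℕ := fun i => if i = m then (G x) m - 1 else (G x) i with hD
      have hDpre : ∀ i < m, D i = (G x) i := fun i hi => by
        simp [hD, Nat.ne_of_lt hi]
      have hDm : D m = (G x) m - 1 := by simp [hD]
      have hxhi : x = Stmt5Aux.hi (G x) m := by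
        have h := Stmt5Aux.engel_hi_of_tail_zero (G x) m hz
        rwa [hG x hx01] at h
      have hSDm : Stmt5Aux.S D m = Stmt5Aux.S (G x) m := Stmt5Aux.S_congr hDpre
      have hPpDm : Stmt5Aux.Pp D m = Stmt5Aux.Pp (G x) m := Stmt5Aux.Pp_congr hDpre
      have hqnat : Stmt5Aux.q D m + 1 = Stmt5Aux.q (G x) m := by
        have hsum : ∑ i ∈ Finset.range m, D i = ∑ i ∈ Finset.range m, (G x) i :=
          Finset.sum_congr rfl (fun i hi => hDpre i (Finset.mem_range.1 hi))
        have hpos := Nat.pos_of_ne_zero hgm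
        unfold Stmt5Aux.q
        rw [Finset.sum_range_succ, Finset.sum_range_succ, hsum, hDm]
        omega
      have hqDm : (Stmt5Aux.q D m : ℝ) = (Stmt5Aux.q (G x) m : ℝ) - 1 := by
        have := hqnat
        push_cast [← this]
        ring
      have hloD : Stmt5Aux.lo D m = x := by
        have e1 : Stmt5Aux.lo D m =
            Stmt5Aux.S D m + Stmt5Aux.Pp D m * ((Stmt5Aux.q D m : ℝ))⁻¹ := by
          unfold Stmt5Aux.lo Stmt5Aux.S
          rw [Finset.sum_range_succ, Stmt5Aux.P, Stmt5Aux.Pp_succ]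
        rw [e1, hSDm, hPpDm, hqDm]
        exact hxhi.symm
      rw [Metric.continuousWithinAt_iff]
      intro ε hε
      obtain ⟨K₀, hK₀⟩ := pickK ε hε
      set p := Stmt5Aux.Pp D (m+1) with hp
      have hppos : 0 < p := Stmt5Aux.Pp_pos D (m+1)
      have hqKpos : (0:ℝ) < (Stmt5Aux.q D m : ℝ) + (K₀:ℝ) + 1 := by positivity
      refine ⟨min (Stmt5Aux.hi D m - x) (p / ((Stmt5Aux.q D m : ℝ) + (K₀:ℝ) + 1)), ?_, ?_⟩
      · apply lt_min
        · have := Stmt5Aux.lo_lt_hi D m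
          rw [hloD] at this
          linarith
        · positivity
      intro y hy hdy
      have hxy : x ≤ y := hy
      rcases eq_or_lt_of_le hxy with heq | hlt
      · rw [← heq]
        simpa using hε
      · rw [Real.dist_eq] at hdy
        have hyx : y - x < min (Stmt5Aux.hi D m - x)
            (p / ((Stmt5Aux.q D m : ℝ) + (K₀:ℝ) + 1)) := by
          rwa [abs_of_pos (by linarith)] at hdy
        have hymem : y ∈ Set.Ioc (Stmt5Aux.lo D m) (Stmt5Aux.hi D m) := by
          constructor
          · rw [hloD]; exact hlt
          · have := lt_of_lt_of_le hyx (min_le_left _ _)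
            linarith
        have hy01 : y ∈ Set.Ioc (0:ℝ) 1 := Stmt5Aux.interval_subset_unit D m hymem
        have hyg : engelSum (G y) = y := hG y hy01
        have hpre : ∀ i ≤ m, (G y) i = D i :=
          Stmt5Aux.digits_det (by rw [hyg]; exact hymem)
        set K := (G y) (m+1) with hK
        have hru_at : r ((G x) m - 1) - r ((G x) m) = u ((G x) m) := by
          have hj1 : (G x) m - 1 + 1 = (G x) m :=
            Nat.succ_pred_eq_of_pos (Nat.pos_of_ne_zero hgm)
          rw [hr, hr, hj1, Finset.sum_range_succ]
          ring
        have hest : |f y - f x| ≤ |r K| + |u K| * (1-c)⁻¹ := by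
          rw [hf y hy01, hf x hx01]
          exact Stmt5Aux.caseB_est hc0 hc1 hcb hr1 hu0 hr0 hgm hz
            (fun i hi => by rw [hpre i hi.le, hDpre i hi])
            (by rw [hpre m (le_refl m), hDm]) hru_at
        -- show K is large
        have hmem2 := Stmt5Aux.engel_mem (G y) (m+1)
        rw [hyg] at hmem2
        have hylo : Stmt5Aux.lo (G y) (m+1) < y := hmem2.1
        have hSexp : Stmt5Aux.lo (G y) (m+1) =
            Stmt5Aux.S (G y) (m+1) + Stmt5Aux.P (G y) (m+1) := by
          unfold Stmt5Aux.lo Stmt5Aux.S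
          rw [Finset.sum_range_succ]
        have hS1 : Stmt5Aux.S (G y) (m+1) = Stmt5Aux.S D (m+1) :=
          Stmt5Aux.S_congr (fun i hi => hpre i (by omega))
        have hSD : Stmt5Aux.S D (m+1) = x := hloD
        have hPp1 : Stmt5Aux.Pp (G y) (m+1) = p :=
          Stmt5Aux.Pp_congr (fun i hi => hpre i (by omega))
        have hPexp : Stmt5Aux.P (G y) (m+1) =
            p * ((Stmt5Aux.q (G y) (m+1) : ℝ))⁻¹ := by
          rw [Stmt5Aux.P, Stmt5Aux.Pp_succ, hPp1]
        have h5 : x + p * ((Stmt5Aux.q (G y) (m+1) : ℝ))⁻¹ < y := by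
          rw [hSexp, hS1, hSD, hPexp] at hylo
          exact hylo
        have h6 : y - x < p / ((Stmt5Aux.q D m : ℝ) + (K₀:ℝ) + 1) :=
          lt_of_lt_of_le hyx (min_le_right _ _)
        have hq7 : p * ((Stmt5Aux.q (G y) (m+1) : ℝ))⁻¹ <
            p * (((Stmt5Aux.q D m : ℝ) + (K₀:ℝ) + 1))⁻¹ := by
          rw [div_eq_mul_inv] at h6
          linarith
        have hq8 : (Stmt5Aux.q D m : ℝ) + (K₀:ℝ) + 1 <
            (Stmt5Aux.q (G y) (m+1) : ℝ) := by
          have hqy : (0:ℝ) < (Stmt5Aux.q (G y) (m+1) : ℝ) := Stmt5Aux.qr_pos _ _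
          have h9 : ((Stmt5Aux.q (G y) (m+1) : ℝ))⁻¹ <
              (((Stmt5Aux.q D m : ℝ) + (K₀:ℝ) + 1))⁻¹ :=
            lt_of_mul_lt_mul_left hq7 hppos.le
          exact (inv_lt_inv₀ hqy hqKpos).1 h9
        have hq9 : Stmt5Aux.q (G y) (m+1) = Stmt5Aux.q D m + K := by
          rw [Stmt5Aux.q_succ, Stmt5Aux.q_congr (fun i hi => hpre i hi)]
        have hKK : K₀ ≤ K := by
          have : ((Stmt5Aux.q D m : ℝ)) + (K₀:ℝ) + 1 <
              (Stmt5Aux.q D m : ℝ) + (K:ℝ) := by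
            rw [hq9] at hq8
            push_cast at hq8 ⊢
            linarith
          have hcast : (K₀:ℝ) < (K:ℝ) := by linarith
          exact_mod_cast hcast.le
        calc dist (f y) (f x) = |f y - f x| := Real.dist_eq _ _
          _ ≤ |r K| + |u K| * (1-c)⁻¹ := hest
          _ < ε := hK₀ K hKK
    · -- infinitely many nonzero digits
      push_neg at hcase
      have hlt_hi : ∀ n, x < Stmt5Aux.hi (G x) n := by
        intro n
        obtain ⟨k, hk1, hk2⟩ := hcase n
        have h1 : x ≤ Stmt5Aux.hi (G x) k := by
          have := Stmt5Aux.engel_le_hi (G x) k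
          rwa [hG x hx01] at this
        have hk3 : k - 1 + 1 = k := by omega
        have h2 : Stmt5Aux.hi (G x) k < Stmt5Aux.hi (G x) (k-1) := by
          have := Stmt5Aux.hi_strict (G x) (k-1) (by rwa [hk3])
          rwa [hk3] at this
        have h3 : Stmt5Aux.hi (G x) (k-1) ≤ Stmt5Aux.hi (G x) n :=
          Stmt5Aux.hi_anti _ (by omega)
        linarith
      rw [Metric.continuousWithinAt_iff]
      intro ε hε
      obtain ⟨n, hn⟩ := pick ε hε
      refine ⟨Stmt5Aux.hi (G x) n - x, by linarith [hlt_hi n], ?_⟩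
      intro y hy hdy
      have hxy : x ≤ y := hy
      rw [Real.dist_eq] at hdy
      have hyx : y - x < Stmt5Aux.hi (G x) n - x := by
        rwa [abs_of_nonneg (by linarith)] at hdy
      rw [Real.dist_eq]
      apply lt_of_le_of_lt _ hn
      apply key x hx01 n y
      exact ⟨lt_of_lt_of_le (hself x hx01 n).1 hxy, by linarith⟩
  -- right continuity at 0
  have hzero : ContinuousWithinAt f (Set.Ici (0:ℝ)) 0 := by
    rw [Metric.continuousWithinAt_iff]
    intro ε hε
    obtain ⟨K₀, hK₀⟩ := pickK ε hε
    refine ⟨((K₀:ℝ)+2)⁻¹, by positivity, ?_⟩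
    intro y hy hdy
    have hy0 : (0:ℝ) ≤ y := hy
    rcases eq_or_lt_of_le hy0 with heq | hypos
    · rw [← heq]
      simpa [hf0] using hε
    · rw [Real.dist_eq, sub_zero, abs_of_pos hypos] at hdy
      have hy1 : y ≤ 1 := by
        have h1 : ((K₀:ℝ)+2)⁻¹ ≤ 1 := by
          rw [inv_le_one_iff₀]
          right
          have : (0:ℝ) ≤ (K₀:ℝ) := Nat.cast_nonneg _
          linarith
        linarith
      have hy01 : y ∈ Set.Ioc (0:ℝ) 1 := ⟨hypos, hy1⟩
      have hyg : engelSum (G y) = y := hG y hy01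
      set K := (G y) 0 with hK
      have hest : |f y - f 0| ≤ |r K| + |u K| * (1-c)⁻¹ := by
        rw [hf y hy01, hf0, sub_zero]
        have habs : |fSeries u r (G y)| ≤
            |fSeries u r (G y) - r K| + |r K| := by
          have h := abs_add_le (fSeries u r (G y) - r K) (r K)
          simpa using h
        refine le_trans habs ?_
        have := Stmt5Aux.F_sub_r0 hc0 hc1 hcb hr1 (G y)
        linarith
      have hmem := Stmt5Aux.engel_mem (G y) 0
      rw [hyg] at hmem
      have hlo0 : Stmt5Aux.lo (G y) 0 = ((Stmt5Aux.q (G y) 0 : ℝ))⁻¹ := by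
        unfold Stmt5Aux.lo Stmt5Aux.S Stmt5Aux.P Stmt5Aux.Pp
        simp
      have hq0 : (Stmt5Aux.q (G y) 0 : ℝ) = (K:ℝ) + 2 := by
        unfold Stmt5Aux.q
        push_cast [Finset.sum_range_one]
        ring
      have h5 : ((K:ℝ)+2)⁻¹ < y := by
        rw [← hq0, ← hlo0]
        exact hmem.1
      have h6 : ((K:ℝ)+2)⁻¹ < ((K₀:ℝ)+2)⁻¹ := lt_trans h5 hdy
      have h7 : (K₀:ℝ) + 2 < (K:ℝ) + 2 :=
        (inv_lt_inv₀ (by positivity) (by positivity)).1 h6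
      have hKK : K₀ ≤ K := by
        have hcast : (K₀:ℝ) < (K:ℝ) := by linarith
        exact_mod_cast hcast.le
      calc dist (f y) (f 0) = |f y - f 0| := Real.dist_eq _ _
        _ ≤ |r K| + |u K| * (1-c)⁻¹ := hest
        _ < ε := hK₀ K hKK
  -- f 1 = 1
  have hone : f 1 = 1 := by
    have h10 : (fun _ : ℕ => 0) = G 1 :=
      hGuniq 1 ⟨one_pos, le_refl 1⟩ _ Stmt5Aux.engel_zero
    rw [hf 1 ⟨one_pos, le_refl 1⟩, ← h10]
    rw [Stmt5Aux.F_of_tail_zero hu0 hr0 hc0 hc1 hcb hr1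
      (g := fun _ => 0) (m := 0) (fun k _ => rfl)]
    unfold Stmt5Aux.Fh Stmt5Aux.Piu
    simp only [Finset.range_zero, Finset.sum_empty, add_zero, zero_add,
      Finset.prod_range_one]
    rw [hr0]
    ring
  refine ⟨?_, hzero, hleft 1 ⟨one_pos, le_refl 1⟩, hone⟩
  intro x hx
  exact continuousAt_iff_continuous_left_right.2
    ⟨hleft x ⟨hx.1, hx.2.le⟩, hright x hx⟩
end

section
/- If u_p = 0 for some non-negative integer p, then f is constant on every cylinder Δ^E_{c_1 c_2 … c_m p}; explicitly, for every x in this cylinder, f(x) = r_{c_1} + Σ_{k=2}^m r_{c_k} ∏_{i=1}^{k−1} u_{c_i} + r_p ∏_{i=1}^m u_{c_i}. -/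
open scoped BigOperators

/-- if u_p = 0 then f is constant on every cylinder Δ^E_{c₁…c_m p},
with the indicated value. -/
theorem stmt8
    (u r : ℕ → ℝ)
    (hu_sum : HasSum u 1)
    (hu_abs : ∀ n, |u n| < 1)
    (hr : ∀ n, r n = 1 - ∑ i ∈ Finset.range (n + 1), u i)
    (hr01 : ∀ n, 0 < r n ∧ r n < 1)
    (G : ℝ → ℕ → ℕ)
    (hG : ∀ x ∈ Set.Ioc (0:ℝ) 1, engelSum (G x) = x)
    (hGuniq : ∀ x ∈ Set.Ioc (0:ℝ) 1, ∀ g : ℕ → ℕ, engelSum g = x → g = G x)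
    (f : ℝ → ℝ)
    (hf : ∀ x ∈ Set.Ioc (0:ℝ) 1, f x = fSeries u r (G x))
    (hf0 : f 0 = 0)
    (p : ℕ) (hp : u p = 0) (m : ℕ) (hm : 1 ≤ m) (c : ℕ → ℕ)
    (x : ℝ) (hx : x ∈ Set.Ioc (0:ℝ) 1)
    (hcyl : ∀ i < m, G x i = c i) (hxm : G x m = p) :
    f x = r (c 0) + (∑ k ∈ Finset.Ico 1 m, r (c k) * ∏ i ∈ Finset.range k, u (c i))
      + r p * ∏ i ∈ Finset.range m, u (c i) := by
  obtain ⟨n, rfl⟩ : ∃ n, m = n + 1 := ⟨m - 1, (Nat.succ_pred_eq_of_pos hm).symm⟩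
  rw [hf x hx]
  unfold fSeries
  have hzero : ∀ k ∉ Finset.range (n + 1),
      r (G x (k + 1)) * ∏ i ∈ Finset.range (k + 1), u (G x i) = 0 := by
    intro k hk
    rw [Finset.mem_range, not_lt] at hk
    have : (∏ i ∈ Finset.range (k + 1), u (G x i)) = 0 :=
      Finset.prod_eq_zero (Finset.mem_range.2 (Nat.lt_succ_of_le hk)) (by rw [hxm, hp])
    rw [this, mul_zero]
  rw [tsum_eq_sum hzero, Finset.sum_range_succ]
  have hG0 : G x 0 = c 0 := hcyl 0 (Nat.succ_pos n)
  have hprod : ∀ k ≤ n + 1, (∏ i ∈ Finset.range k, u (G x i))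
      = ∏ i ∈ Finset.range k, u (c i) := by
    intro k hk
    refine Finset.prod_congr rfl fun i hi => ?_
    rw [hcyl i (lt_of_lt_of_le (Finset.mem_range.1 hi) hk)]
  have hmain : ∑ k ∈ Finset.range n, r (G x (k + 1)) * ∏ i ∈ Finset.range (k + 1), u (G x i)
      = ∑ k ∈ Finset.Ico 1 (n + 1), r (c k) * ∏ i ∈ Finset.range k, u (c i) := by
    rw [Finset.sum_Ico_eq_sum_range]
    simp only [Nat.add_sub_cancel]
    refine Finset.sum_congr rfl fun k hk => ?_
    have hk' := Finset.mem_range.1 hk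
    rw [hcyl (k + 1) (by omega), hprod (k + 1) (by omega), add_comm 1 k]
  rw [hmain, hxm, hprod (n + 1) le_rfl, hG0]
  ring
end

section
/- For any non-negative integers c_1,…,c_m, the change of f over the cylinder Δ^E_{c_1…c_m}, namely μ_f(Δ^E_{c_1…c_m}) := f(Δ^E_{c_1…c_m(0)}) − f(Δ^E_{c_1…c_{m−1}[c_m+1](0)}) (the value of f at the right endpoint minus its value at the left endpoint of the cylinder), equals ∏_{i=1}^m u_{c_i}. -/
open scoped BigOperators

lemma engelSum_mem_Ioc (g : ℕ → ℕ) : engelSum g ∈ Set.Ioc (0:ℝ) 1 := by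
  set t : ℕ → ℝ := fun n => ∏ k ∈ Finset.range (n + 1),
    ((2 : ℝ) + ∑ i ∈ Finset.range (k + 1), (g i : ℝ))⁻¹ with ht
  have hden : ∀ k : ℕ, (2:ℝ) ≤ 2 + ∑ i ∈ Finset.range (k + 1), (g i : ℝ) := by
    intro k
    have : (0:ℝ) ≤ ∑ i ∈ Finset.range (k + 1), (g i : ℝ) :=
      Finset.sum_nonneg fun i _ => Nat.cast_nonneg _
    linarith
  have htpos : ∀ n, 0 < t n := by
    intro n
    exact Finset.prod_pos fun k _ => inv_pos.2 (lt_of_lt_of_le two_pos (hden k))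
  have htle : ∀ n, t n ≤ (1/2 : ℝ) ^ (n + 1) := by
    intro n
    have : t n ≤ ∏ k ∈ Finset.range (n + 1), (1/2 : ℝ) := by
      apply Finset.prod_le_prod
      · intro k _; positivity
      · intro k _
        rw [one_div]
        exact inv_anti₀ two_pos (hden k)
    simpa using this
  have hgsum : Summable (fun n : ℕ => (1/2 : ℝ) ^ (n + 1)) := by
    have := summable_geometric_of_abs_lt_one (r := (1/2:ℝ)) (by rw [abs_of_pos]; norm_num; norm_num)
    exact this.comp_injective (add_left_injective 1)
  have hts : Summable t :=
    Summable.of_nonneg_of_le (fun n => (htpos n).le) htle hgsum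
  constructor
  · exact lt_of_lt_of_le (htpos 0) (Summable.le_tsum hts 0 fun n _ => (htpos n).le)
  · have h1 : ∑' n : ℕ, (1/2 : ℝ) ^ (n + 1) = 1 := by
      have : ∑' n : ℕ, (1/2 : ℝ) ^ (n + 1) = (1/2) * ∑' n : ℕ, (1/2 : ℝ) ^ n := by
        rw [← tsum_mul_left]
        congr 1; ext n; ring
      rw [this, tsum_geometric_of_abs_lt_one (by rw [abs_of_pos]; norm_num; norm_num)]
      norm_num
    calc engelSum g ≤ ∑' n : ℕ, (1/2 : ℝ) ^ (n + 1) := Summable.tsum_le_tsum htle hts hgsum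
      _ = 1 := h1

lemma fSeries_eventually_zero (u r : ℕ → ℝ)
    (hr0 : r 0 = 1 - u 0) (hu0 : |u 0| < 1)
    (m : ℕ) (hm : 1 ≤ m) (g : ℕ → ℕ) (hg : ∀ n, m ≤ n → g n = 0) :
    fSeries u r g = r (g 0)
      + (∑ k ∈ Finset.range (m - 1), r (g (k + 1)) * ∏ i ∈ Finset.range (k + 1), u (g i))
      + ∏ i ∈ Finset.range m, u (g i) := by
  set a : ℕ → ℝ := fun k => r (g (k + 1)) * ∏ i ∈ Finset.range (k + 1), u (g i) with ha
  set P : ℝ := ∏ i ∈ Finset.range m, u (g i) with hP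
  have key : ∀ j : ℕ, a (j + (m - 1)) = (r 0 * P) * u 0 ^ j := by
    intro j
    have h1 : j + (m - 1) + 1 = m + j := by omega
    have h2 : g (m + j) = 0 := hg _ (by omega)
    have h3 : ∏ i ∈ Finset.range (m + j), u (g i) = P * u 0 ^ j := by
      rw [Finset.prod_range_add]
      congr 1
      rw [Finset.prod_congr rfl fun i _ => by rw [hg (m + i) (by omega)]]
      simp
    simp only [ha, h1, h2, h3]
    ring
  have hgeo : Summable (fun j : ℕ => (r 0 * P) * u 0 ^ j) :=
    (summable_geometric_of_abs_lt_one hu0).mul_left _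
  have htail : Summable (fun j => a (j + (m - 1))) := by
    simpa only [key] using hgeo
  have hsa : Summable a := (summable_nat_add_iff (m - 1)).mp htail
  have hsplit := Summable.sum_add_tsum_nat_add (f := a) (m - 1) hsa
  have htailsum : ∑' j, a (j + (m - 1)) = P := by
    have h1 : (1 : ℝ) - u 0 ≠ 0 := by
      have := abs_lt.mp hu0
      linarith [this.2]
    calc ∑' j, a (j + (m - 1)) = ∑' j : ℕ, (r 0 * P) * u 0 ^ j := by
          simp only [key]
      _ = (r 0 * P) * (1 - u 0)⁻¹ := by
          rw [tsum_mul_left, tsum_geometric_of_abs_lt_one hu0]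
      _ = P := by
          rw [hr0]; field_simp
  have : ∑' k, a k = (∑ k ∈ Finset.range (m - 1), a k) + P := by
    rw [← hsplit, htailsum]
  rw [fSeries, ← ha, this]
  ring

/-- the change of f over the cylinder Δ^E_{c₁…c_m}
(value at the right endpoint minus value at the left endpoint) equals ∏_{i=1}^m u_{c_i}. -/
theorem stmt10
    (u r : ℕ → ℝ)
    (hu_sum : HasSum u 1)
    (hu_abs : ∀ n, |u n| < 1)
    (hr : ∀ n, r n = 1 - ∑ i ∈ Finset.range (n + 1), u i)
    (hr01 : ∀ n, 0 < r n ∧ r n < 1)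
    (G : ℝ → ℕ → ℕ)
    (hG : ∀ x ∈ Set.Ioc (0:ℝ) 1, engelSum (G x) = x)
    (hGuniq : ∀ x ∈ Set.Ioc (0:ℝ) 1, ∀ g : ℕ → ℕ, engelSum g = x → g = G x)
    (f : ℝ → ℝ)
    (hf : ∀ x ∈ Set.Ioc (0:ℝ) 1, f x = fSeries u r (G x))
    (hf0 : f 0 = 0)
    (m : ℕ) (hm : 1 ≤ m) (c : ℕ → ℕ)
    (bpt : ℝ) (hbpt : bpt = engelSum (fun n => if n < m then c n else 0))
    (apt : ℝ) (hapt : apt = engelSum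
      (fun n => if n < m - 1 then c n else if n = m - 1 then c (m - 1) + 1 else 0)) :
    f bpt - f apt = ∏ i ∈ Finset.range m, u (c i) := by
  obtain ⟨M, rfl⟩ : ∃ M, m = M + 1 := ⟨m - 1, by omega⟩
  simp only [Nat.add_sub_cancel] at hapt
  set gb : ℕ → ℕ := fun n => if n < M + 1 then c n else 0 with hgb
  set ga : ℕ → ℕ := fun n => if n < M then c n else if n = M then c M + 1 else 0 with hga
  have hb_mem : bpt ∈ Set.Ioc (0:ℝ) 1 := hbpt ▸ engelSum_mem_Ioc gb
  have ha_mem : apt ∈ Set.Ioc (0:ℝ) 1 := hapt ▸ engelSum_mem_Ioc ga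
  have hGb : G bpt = gb := (hGuniq bpt hb_mem gb hbpt.symm).symm
  have hGa : G apt = ga := (hGuniq apt ha_mem ga hapt.symm).symm
  have hr0 : r 0 = 1 - u 0 := by simpa using hr 0
  have hu0 := hu_abs 0
  have hrdiff : ∀ n, r n - r (n + 1) = u (n + 1) := by
    intro n
    rw [hr n, hr (n + 1), Finset.sum_range_succ (f := u) (n := n + 1)]
    ring
  have hgbzero : ∀ n, M + 1 ≤ n → gb n = 0 := by
    intro n hn; simp only [hgb]; rw [if_neg (by omega)]
  have hgazero : ∀ n, M + 1 ≤ n → ga n = 0 := by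
    intro n hn; simp only [hga]; rw [if_neg (by omega), if_neg (by omega)]
  have hfb := fSeries_eventually_zero u r hr0 hu0 (M + 1) (by omega) gb hgbzero
  have hfa := fSeries_eventually_zero u r hr0 hu0 (M + 1) (by omega) ga hgazero
  rw [hf bpt hb_mem, hf apt ha_mem, hGb, hGa, hfb, hfa]
  simp only [Nat.add_sub_cancel]
  have hgb_eq : ∀ i, i < M + 1 → gb i = c i := by
    intro i hi; simp only [hgb]; rw [if_pos hi]
  have hga_eq : ∀ i, i < M → ga i = c i := by
    intro i hi; simp only [hga]; rw [if_pos hi]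
  have hgaM : ga M = c M + 1 := by
    simp [hga]
  have hgbM : gb M = c M := hgb_eq M (by omega)
  rcases M with _ | M'
  · have epb : ∏ i ∈ Finset.range (0 + 1), u (gb i) = u (c 0) := by
      rw [Finset.prod_range_succ, Finset.prod_range_zero, hgbM, one_mul]
    have epa : ∏ i ∈ Finset.range (0 + 1), u (ga i) = u (c 0 + 1) := by
      rw [Finset.prod_range_succ, Finset.prod_range_zero, hgaM, one_mul]
    rw [epb, epa, hgbM, hgaM, Finset.prod_range_one]
    simp only [Finset.range_zero, Finset.sum_empty]
    have := hrdiff (c 0)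
    linarith
  · have eQ : ∏ i ∈ Finset.range (M' + 1), u (gb i)
        = ∏ i ∈ Finset.range (M' + 1), u (c i) :=
      Finset.prod_congr rfl fun i hi => by
        rw [hgb_eq i (by have := Finset.mem_range.mp hi; omega)]
    have eQ' : ∏ i ∈ Finset.range (M' + 1), u (ga i)
        = ∏ i ∈ Finset.range (M' + 1), u (c i) :=
      Finset.prod_congr rfl fun i hi => by
        rw [hga_eq i (Finset.mem_range.mp hi)]
    have eS : ∑ k ∈ Finset.range M', r (gb (k + 1)) * ∏ i ∈ Finset.range (k + 1), u (gb i)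
        = ∑ k ∈ Finset.range M', r (ga (k + 1)) * ∏ i ∈ Finset.range (k + 1), u (ga i) := by
      refine Finset.sum_congr rfl fun k hk => ?_
      have hk' := Finset.mem_range.mp hk
      rw [hgb_eq (k + 1) (by omega), hga_eq (k + 1) (by omega)]
      congr 1
      exact Finset.prod_congr rfl fun i hi => by
        rw [hgb_eq i (by have := Finset.mem_range.mp hi; omega),
          hga_eq i (by have := Finset.mem_range.mp hi; omega)]
    have hgb0 : gb 0 = c 0 := hgb_eq 0 (by omega)
    have hga0 : ga 0 = c 0 := hga_eq 0 (by omega)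
    have epb : ∏ i ∈ Finset.range (M' + 1 + 1), u (gb i)
        = (∏ i ∈ Finset.range (M' + 1), u (c i)) * u (c (M' + 1)) := by
      rw [Finset.prod_range_succ, eQ, hgbM]
    have epa : ∏ i ∈ Finset.range (M' + 1 + 1), u (ga i)
        = (∏ i ∈ Finset.range (M' + 1), u (c i)) * u (c (M' + 1) + 1) := by
      rw [Finset.prod_range_succ, eQ', hgaM]
    have esb : ∑ k ∈ Finset.range (M' + 1),
          r (gb (k + 1)) * ∏ i ∈ Finset.range (k + 1), u (gb i)
        = (∑ k ∈ Finset.range M', r (gb (k + 1)) * ∏ i ∈ Finset.range (k + 1), u (gb i))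
          + r (c (M' + 1)) * ∏ i ∈ Finset.range (M' + 1), u (c i) := by
      rw [Finset.sum_range_succ, eQ, hgbM]
    have esa : ∑ k ∈ Finset.range (M' + 1),
          r (ga (k + 1)) * ∏ i ∈ Finset.range (k + 1), u (ga i)
        = (∑ k ∈ Finset.range M', r (ga (k + 1)) * ∏ i ∈ Finset.range (k + 1), u (ga i))
          + r (c (M' + 1) + 1) * ∏ i ∈ Finset.range (M' + 1), u (c i) := by
      rw [Finset.sum_range_succ, eQ', hgaM]
    have epc : ∏ i ∈ Finset.range (M' + 1 + 1), u (c i)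
        = (∏ i ∈ Finset.range (M' + 1), u (c i)) * u (c (M' + 1)) :=
      Finset.prod_range_succ _ _
    rw [hgb0, hga0, epb, epa, esb, esa, eS, epc]
    linear_combination (∏ i ∈ Finset.range (M' + 1), u (c i)) * hrdiff (c (M' + 1))
end

section
/- If u_n ≠ 0 for every non-negative integer n, then f has no interval of constancy: there is no non-degenerate subinterval (a, b) of [0, 1] on which f is constant. -/
set_option maxHeartbeats 1000000

open scoped BigOperators

namespace Stmt11Aux

open Finset Filter

/-- The `n`-th term of the Engel series. -/
noncomputable def eterm (g : ℕ → ℕ) (n : ℕ) : ℝ :=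
  ∏ k ∈ Finset.range (n + 1), ((2 : ℝ) + ∑ i ∈ Finset.range (k + 1), (g i : ℝ))⁻¹

lemma engelSum_eq (g : ℕ → ℕ) : engelSum g = ∑' n, eterm g n := rfl

lemma eterm_pos (g : ℕ → ℕ) (n : ℕ) : 0 < eterm g n := by
  apply Finset.prod_pos
  intro k _
  have h : (0:ℝ) ≤ ∑ i ∈ Finset.range (k+1), (g i : ℝ) :=
    Finset.sum_nonneg (fun i _ => Nat.cast_nonneg _)
  positivity

lemma eterm_le (g : ℕ → ℕ) (n : ℕ) : eterm g n ≤ (1/2 : ℝ) ^ (n + 1) := by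
  have h : eterm g n ≤ ∏ _k ∈ Finset.range (n+1), (1/2 : ℝ) := by
    apply Finset.prod_le_prod
    · intro k _
      have h : (0:ℝ) ≤ ∑ i ∈ Finset.range (k+1), (g i : ℝ) :=
        Finset.sum_nonneg (fun i _ => Nat.cast_nonneg _)
      positivity
    · intro k _
      have h : (0:ℝ) ≤ ∑ i ∈ Finset.range (k+1), (g i : ℝ) :=
        Finset.sum_nonneg (fun i _ => Nat.cast_nonneg _)
      rw [one_div]
      exact inv_anti₀ (by norm_num) (by linarith)
  simpa using h

lemma eterm_summable (g : ℕ → ℕ) : Summable (eterm g) := by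
  have hgeo : Summable (fun n : ℕ => (1/2 : ℝ) ^ (n+1)) := by
    have h := (summable_geometric_of_lt_one (by norm_num : (0:ℝ) ≤ 1/2)
      (by norm_num)).mul_right (1/2 : ℝ)
    exact h.congr (fun n => (pow_succ _ _).symm)
  exact Summable.of_nonneg_of_le (fun n => (eterm_pos g n).le) (eterm_le g) hgeo

lemma tail_pos (g : ℕ → ℕ) (N : ℕ) : 0 < ∑' n, eterm g (n + N) :=
  Summable.tsum_pos ((summable_nat_add_iff N).2 (eterm_summable g))
    (fun n => (eterm_pos _ _).le) 0 (eterm_pos _ _)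

lemma tail_le (g : ℕ → ℕ) (N : ℕ) : ∑' n, eterm g (n + N) ≤ (1/2 : ℝ) ^ N := by
  have hs : Summable (fun n => eterm g (n + N)) :=
    (summable_nat_add_iff N).2 (eterm_summable g)
  have hgeo : Summable (fun n : ℕ => (1/2 : ℝ) ^ n * (1/2) ^ (N+1)) :=
    (summable_geometric_of_lt_one (by norm_num : (0:ℝ) ≤ 1/2) (by norm_num)).mul_right _
  calc ∑' n, eterm g (n + N)
      ≤ ∑' n : ℕ, (1/2 : ℝ) ^ n * (1/2) ^ (N+1) := by
        apply Summable.tsum_le_tsum _ hs hgeo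
        intro n
        calc eterm g (n + N) ≤ (1/2 : ℝ) ^ (n + N + 1) := eterm_le g (n + N)
          _ = (1/2 : ℝ) ^ n * (1/2) ^ (N+1) := by
              rw [show n + N + 1 = n + (N+1) from by omega, pow_add]
    _ = (∑' n : ℕ, (1/2 : ℝ) ^ n) * (1/2) ^ (N+1) := tsum_mul_right
    _ = 2 * (1/2) ^ (N+1) := by
        rw [tsum_geometric_of_lt_one (by norm_num : (0:ℝ) ≤ 1/2) (by norm_num)]
        norm_num
    _ = (1/2 : ℝ) ^ N := by rw [pow_succ]; ring

lemma engel_close (g h : ℕ → ℕ) (N : ℕ) (hagree : ∀ i, i < N → g i = h i) :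
    |engelSum g - engelSum h| < (1/2 : ℝ) ^ N := by
  have e1 : engelSum g = ∑ i ∈ range N, eterm g i + ∑' n, eterm g (n + N) :=
    (Summable.sum_add_tsum_nat_add N (eterm_summable g)).symm
  have e2 : engelSum h = ∑ i ∈ range N, eterm h i + ∑' n, eterm h (n + N) :=
    (Summable.sum_add_tsum_nat_add N (eterm_summable h)).symm
  have hpref : ∑ i ∈ range N, eterm g i = ∑ i ∈ range N, eterm h i := by
    apply Finset.sum_congr rfl
    intro n hn
    have hn' : n < N := Finset.mem_range.1 hn
    unfold eterm
    apply Finset.prod_congr rfl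
    intro k hk
    have hk' : k < n + 1 := Finset.mem_range.1 hk
    have hsum : ∑ i ∈ Finset.range (k+1), ((g i : ℝ)) = ∑ i ∈ Finset.range (k+1), ((h i : ℝ)) := by
      apply Finset.sum_congr rfl
      intro i hi
      have hi' : i < k + 1 := Finset.mem_range.1 hi
      rw [hagree i (by omega)]
    rw [hsum]
  have pg := tail_pos g N
  have ph := tail_pos h N
  have lg := tail_le g N
  have lh := tail_le h N
  rw [e1, e2, hpref, abs_sub_lt_iff]
  constructor <;> linarith

/-- The digit sequence which copies `g` below `N`, has digit `t` at `N`,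
and `0` afterwards. -/
def hseq (g : ℕ → ℕ) (N t : ℕ) : ℕ → ℕ :=
  fun i => if i < N then g i else if i = N then t else 0

lemma hseq_lt {g : ℕ → ℕ} {N t i : ℕ} (h : i < N) : hseq g N t i = g i := if_pos h

lemma hseq_eq {g : ℕ → ℕ} {N t : ℕ} : hseq g N t N = t := by simp [hseq]

lemma hseq_gt {g : ℕ → ℕ} {N t i : ℕ} (h : N < i) : hseq g N t i = 0 := by
  unfold hseq
  rw [if_neg (by omega), if_neg (by omega)]

lemma fseries_hseq (u r : ℕ → ℝ) (hu0 : |u 0| < 1) (g : ℕ → ℕ) (M t : ℕ) :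
    fSeries u r (hseq g (M+1) t) =
      (r (g 0) + ∑ k ∈ range M, r (g (k+1)) * ∏ i ∈ range (k+1), u (g i))
      + (∏ i ∈ range (M+1), u (g i)) * (r t + u t * (r 0 * (1 - u 0)⁻¹)) := by
  set P : ℝ := ∏ i ∈ range (M+1), u (g i) with hP
  set a : ℕ → ℝ :=
    fun k => r (hseq g (M+1) t (k+1)) * ∏ i ∈ range (k+1), u (hseq g (M+1) t i) with ha
  have key : ∀ j : ℕ, a (j + (M+1)) = (r 0 * (P * u t)) * u 0 ^ j := by
    intro j
    have h1 : hseq g (M+1) t (j + (M+1) + 1) = 0 := hseq_gt (by omega)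
    have h2 : ∏ i ∈ range (j + (M+1) + 1), u (hseq g (M+1) t i) = (P * u t) * u 0 ^ j := by
      have hre : j + (M+1) + 1 = (M+2) + j := by omega
      rw [hre, Finset.prod_range_add]
      congr 1
      · rw [Finset.prod_range_succ]
        congr 1
        · exact Finset.prod_congr rfl
            (fun i hi => by rw [hseq_lt (Finset.mem_range.1 hi)])
        · rw [hseq_eq]
      · calc ∏ i ∈ range j, u (hseq g (M+1) t ((M+2) + i))
            = ∏ _i ∈ range j, u 0 :=
              Finset.prod_congr rfl (fun i _ => by rw [hseq_gt (by omega)])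
          _ = u 0 ^ j := by rw [Finset.prod_const, Finset.card_range]
    rw [ha]
    simp only []
    rw [h1, h2]
    ring
  have hsum : Summable a := by
    rw [← summable_nat_add_iff (M+1)]
    have hgeo : Summable (fun j : ℕ => (r 0 * (P * u t)) * u 0 ^ j) :=
      (summable_geometric_of_norm_lt_one (x := u 0) (by rwa [Real.norm_eq_abs])).mul_left _
    exact hgeo.congr (fun j => (key j).symm)
  have htail : ∑' j : ℕ, a (j + (M+1)) = (r 0 * (P * u t)) * (1 - u 0)⁻¹ := by
    rw [tsum_congr key, tsum_mul_left,
      tsum_geometric_of_norm_lt_one (by rwa [Real.norm_eq_abs])]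
  have hsplit := Summable.sum_add_tsum_nat_add (f := a) (M+1) hsum
  have hpre : ∑ k ∈ range (M+1), a k =
      (∑ k ∈ range M, r (g (k+1)) * ∏ i ∈ range (k+1), u (g i)) + r t * P := by
    rw [Finset.sum_range_succ]
    congr 1
    · apply Finset.sum_congr rfl
      intro k hk
      have hk' : k < M := Finset.mem_range.1 hk
      rw [ha]
      simp only []
      rw [hseq_lt (show k + 1 < M + 1 by omega)]
      congr 1
      exact Finset.prod_congr rfl
        (fun i hi => by rw [hseq_lt (by have := Finset.mem_range.1 hi; omega)])
    · rw [ha]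
      simp only []
      rw [hseq_eq]
      congr 1
      exact Finset.prod_congr rfl
        (fun i hi => by rw [hseq_lt (Finset.mem_range.1 hi)])
  have h0 : hseq g (M+1) t 0 = g 0 := hseq_lt (Nat.succ_pos M)
  show r (hseq g (M+1) t 0) + ∑' k, a k = _
  rw [h0, ← hsplit, hpre, htail]
  ring

lemma phi_nonconst (u r : ℕ → ℝ) (hu_sum : HasSum u 1) (hu0abs : |u 0| < 1)
    (hr : ∀ n, r n = 1 - ∑ i ∈ range (n+1), u i) (hr0 : 0 < r 0) :
    ∃ t, r t + u t * (r 0 * (1 - u 0)⁻¹) ≠ r 0 + u 0 * (r 0 * (1 - u 0)⁻¹) := by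
  by_contra hcon
  push_neg at hcon
  set c : ℝ := r 0 * (1 - u 0)⁻¹ with hc
  have hne : (1:ℝ) - u 0 ≠ 0 := by
    rw [abs_lt] at hu0abs
    intro h
    linarith [hu0abs.2]
  have h1 : Tendsto (fun n => ∑ i ∈ range n, u i) atTop (nhds 1) := hu_sum.tendsto_sum_nat
  have h2 : Tendsto (fun n : ℕ => ∑ i ∈ range (n+1), u i) atTop (nhds 1) :=
    h1.comp (tendsto_add_atTop_nat 1)
  have h3 : Tendsto (fun n : ℕ => 1 - ∑ i ∈ range (n+1), u i) atTop (nhds (1-1)) :=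
    tendsto_const_nhds.sub h2
  have hrlim : Tendsto r atTop (nhds 0) := by
    have := h3.congr (fun n => (hr n).symm)
    simpa using this
  have hulim : Tendsto u atTop (nhds 0) := hu_sum.summable.tendsto_atTop_zero
  have hphil : Tendsto (fun t => r t + u t * c) atTop (nhds 0) := by
    have := hrlim.add (hulim.mul_const c)
    simpa using this
  have h0 : r 0 + u 0 * c = 0 := by
    have hconst : Tendsto (fun _ : ℕ => r 0 + u 0 * c) atTop (nhds (r 0 + u 0 * c)) :=
      tendsto_const_nhds
    exact tendsto_nhds_unique hconst (hphil.congr hcon)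
  rw [hc] at h0
  have hfin : r 0 = 0 := by
    field_simp at h0
    linear_combination h0
  linarith

end Stmt11Aux

open Stmt11Aux Finset Filter

/-- if no u_n vanishes, f has no interval of constancy in [0,1]. -/
theorem stmt11
    (u r : ℕ → ℝ)
    (hu_sum : HasSum u 1)
    (hu_abs : ∀ n, |u n| < 1)
    (hr : ∀ n, r n = 1 - ∑ i ∈ Finset.range (n + 1), u i)
    (hr01 : ∀ n, 0 < r n ∧ r n < 1)
    (G : ℝ → ℕ → ℕ)
    (hG : ∀ x ∈ Set.Ioc (0:ℝ) 1, engelSum (G x) = x)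
    (hGuniq : ∀ x ∈ Set.Ioc (0:ℝ) 1, ∀ g : ℕ → ℕ, engelSum g = x → g = G x)
    (f : ℝ → ℝ)
    (hf : ∀ x ∈ Set.Ioc (0:ℝ) 1, f x = fSeries u r (G x))
    (hf0 : f 0 = 0)
    (hu0 : ∀ n, u n ≠ 0) :
    ¬ ∃ a b : ℝ, 0 ≤ a ∧ a < b ∧ b ≤ 1 ∧
      ∃ cst : ℝ, ∀ x ∈ Set.Ioo a b, f x = cst := by
  rintro ⟨a, b, ha0, hab, hb1, cst, hcst⟩
  set x : ℝ := (a + b) / 2 with hxdef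
  have hxa : a < x := by rw [hxdef]; linarith
  have hxb : x < b := by rw [hxdef]; linarith
  have hx01 : x ∈ Set.Ioc (0:ℝ) 1 := ⟨by linarith, by linarith⟩
  set g : ℕ → ℕ := G x with hg
  have hgx : engelSum g = x := hG x hx01
  have hε : 0 < min (x - a) (b - x) := lt_min (by linarith) (by linarith)
  obtain ⟨M, hM⟩ := exists_pow_lt_of_lt_one hε (by norm_num : (1/2 : ℝ) < 1)
  have hMlt : (1/2 : ℝ) ^ (M + 1) < min (x - a) (b - x) :=
    lt_of_le_of_lt
      (pow_le_pow_of_le_one (by norm_num) (by norm_num) (Nat.le_succ M)) hM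
  -- The key computation: for every t, the point y t is in (a,b) and
  -- f (y t) = C + P * (r t + u t * c).
  set P : ℝ := ∏ i ∈ range (M+1), u (g i) with hP
  set C : ℝ := r (g 0) + ∑ k ∈ range M, r (g (k+1)) * ∏ i ∈ range (k+1), u (g i) with hC
  set c : ℝ := r 0 * (1 - u 0)⁻¹ with hc
  have hPne : P ≠ 0 := Finset.prod_ne_zero_iff.2 (fun i _ => hu0 (g i))
  have key : ∀ t : ℕ, C + P * (r t + u t * c) = cst := by
    intro t
    set y : ℝ := engelSum (hseq g (M+1) t) with hy
    have hclose : |engelSum g - y| < (1/2 : ℝ) ^ (M+1) :=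
      engel_close g (hseq g (M+1) t) (M+1) (fun i hi => (hseq_lt hi).symm)
    rw [hgx] at hclose
    rw [abs_sub_lt_iff] at hclose
    have hya : a < y := by
      have := hclose.1
      have h2 : (1/2 : ℝ) ^ (M+1) ≤ x - a := hMlt.le.trans (min_le_left _ _)
      linarith
    have hyb : y < b := by
      have := hclose.2
      have h2 : (1/2 : ℝ) ^ (M+1) ≤ b - x := hMlt.le.trans (min_le_right _ _)
      linarith
    have hy01 : y ∈ Set.Ioc (0:ℝ) 1 := ⟨by linarith, by linarith⟩
    have hGy : hseq g (M+1) t = G y := hGuniq y hy01 (hseq g (M+1) t) rfl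
    have hfy : f y = fSeries u r (hseq g (M+1) t) := by
      rw [hf y hy01, ← hGy]
    have hval : f y = C + P * (r t + u t * c) := by
      rw [hfy, fseries_hseq u r (hu_abs 0) g M t]
    rw [← hval]
    exact hcst y ⟨hya, hyb⟩
  obtain ⟨t, ht⟩ := phi_nonconst u r hu_sum (hu_abs 0) hr (hr01 0).1
  apply ht
  have h1 := key t
  have h2 := key 0
  have h3 : P * (r t + u t * c) = P * (r 0 + u 0 * c) := by linarith
  exact mul_left_cancel₀ hPne h3
end

section
/- If u_n ≥ 0 for every non-negative integer n, then f is non-decreasing on [0, 1]; together with f(0) = 0, f(1) = 1 and continuity, f is a probability distribution function on [0,1]. Moreover, f is the distribution function of the random variable ξ = Δ^E_{η_1 η_2 …}, where (η_k) is an i.i.d. sequence of ℕ-valued random variables with P(η_k = n) = u_n; that is, for every x ∈ (0,1], f(x) = μ{ g ∈ ℕ^ℕ : Δ^E_g < x }, where μ is the infinite product of the probability measure on ℕ assigning mass u_n to n. -/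
open scoped BigOperators

open Finset

/- general Engel tail with real base b -/
noncomputable def eTerm (b : ℝ) (g : ℕ → ℕ) (n : ℕ) : ℝ :=
  ∏ k ∈ Finset.range (n + 1), (b + ∑ i ∈ Finset.range (k + 1), (g i : ℝ))⁻¹

noncomputable def eE (b : ℝ) (g : ℕ → ℕ) : ℝ := ∑' n, eTerm b g n

lemma engelSum_eq_eE (g : ℕ → ℕ) : engelSum g = eE 2 g := rfl

lemma eTerm_pos {b : ℝ} (hb : 2 ≤ b) (g : ℕ → ℕ) (n : ℕ) : 0 < eTerm b g n := by
  refine Finset.prod_pos fun k _ => inv_pos.2 ?_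
  have h1 : (0:ℝ) ≤ ∑ i ∈ Finset.range (k+1), (g i : ℝ) :=
    Finset.sum_nonneg fun i _ => by positivity
  linarith

lemma eTerm_le {b : ℝ} (hb : 2 ≤ b) (g : ℕ → ℕ) (n : ℕ) :
    eTerm b g n ≤ b⁻¹ ^ (n + 1) := by
  have h : ∀ k ∈ Finset.range (n+1),
      (b + ∑ i ∈ Finset.range (k + 1), (g i : ℝ))⁻¹ ≤ b⁻¹ := by
    intro k _
    have h1 : (0:ℝ) ≤ ∑ i ∈ Finset.range (k+1), (g i : ℝ) :=
      Finset.sum_nonneg fun i _ => by positivity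
    apply inv_anti₀ (by linarith) (by linarith)
  calc eTerm b g n ≤ ∏ k ∈ Finset.range (n+1), b⁻¹ := by
        refine Finset.prod_le_prod (fun k _ => ?_) h
        refine inv_nonneg.2 ?_
        have h1 : (0:ℝ) ≤ ∑ i ∈ Finset.range (k+1), (g i : ℝ) :=
          Finset.sum_nonneg fun i _ => by positivity
        linarith
    _ = b⁻¹ ^ (n + 1) := by rw [Finset.prod_const, Finset.card_range]

lemma eTerm_summable {b : ℝ} (hb : 2 ≤ b) (g : ℕ → ℕ) : Summable (eTerm b g) := by
  have hb0 : (0:ℝ) < b := by linarith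
  have hble : b⁻¹ < 1 := by
    rw [inv_lt_one_iff₀]; right; linarith
  refine Summable.of_nonneg_of_le (fun n => (eTerm_pos hb g n).le)
    (fun n => eTerm_le hb g n) ?_
  have : Summable (fun n : ℕ => b⁻¹ * b⁻¹ ^ n) :=
    (summable_geometric_of_lt_one (by positivity) hble).mul_left _
  exact this.congr fun n => by ring

lemma eE_pos {b : ℝ} (hb : 2 ≤ b) (g : ℕ → ℕ) : 0 < eE b g :=
  lt_of_lt_of_le (eTerm_pos hb g 0)
    (Summable.le_tsum (eTerm_summable hb g) 0 fun j _ => (eTerm_pos hb g j).le)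

lemma eE_le {b : ℝ} (hb : 2 ≤ b) (g : ℕ → ℕ) : eE b g ≤ (b - 1)⁻¹ := by
  have hb0 : (0:ℝ) < b := by linarith
  have hble : b⁻¹ < 1 := by rw [inv_lt_one_iff₀]; right; linarith
  have hsum : Summable (fun n : ℕ => b⁻¹ * b⁻¹ ^ n) :=
    (summable_geometric_of_lt_one (by positivity) hble).mul_left _
  have h1 : eE b g ≤ ∑' n : ℕ, b⁻¹ * b⁻¹ ^ n := by
    refine Summable.tsum_le_tsum (fun n => ?_) (eTerm_summable hb g) hsum
    calc eTerm b g n ≤ b⁻¹ ^ (n+1) := eTerm_le hb g n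
      _ = b⁻¹ * b⁻¹ ^ n := by ring
  have h2 : ∑' n : ℕ, b⁻¹ * b⁻¹ ^ n = b⁻¹ * (1 - b⁻¹)⁻¹ := by
    rw [tsum_mul_left, tsum_geometric_of_lt_one (by positivity) hble]
  rw [h2] at h1
  have h3 : b⁻¹ * (1 - b⁻¹)⁻¹ = (b - 1)⁻¹ := by
    rw [← mul_inv]
    congr 1
    field_simp
  rwa [h3] at h1

lemma eE_rec {b : ℝ} (hb : 2 ≤ b) (g : ℕ → ℕ) :
    eE b g = (b + g 0)⁻¹ * (1 + eE (b + g 0) (fun n => g (n + 1))) := by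
  have hshift : ∀ n, eTerm b g (n + 1)
      = (b + g 0)⁻¹ * eTerm (b + g 0) (fun n => g (n + 1)) n := by
    intro n
    unfold eTerm
    rw [Finset.prod_range_succ']
    have h0 : (b + ∑ i ∈ Finset.range (0 + 1), (g i : ℝ))⁻¹ = (b + g 0)⁻¹ := by
      simp
    rw [h0, mul_comm]
    congr 1
    refine Finset.prod_congr rfl fun k _ => ?_
    congr 1
    rw [Finset.sum_range_succ']
    push_cast
    ring
  have hsum := eTerm_summable hb g
  rw [eE, Summable.tsum_eq_zero_add hsum]
  have ht0 : eTerm b g 0 = (b + g 0)⁻¹ := by unfold eTerm; simp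
  have hb2 : 2 ≤ b + (g 0 : ℝ) := by
    have : (0:ℝ) ≤ g 0 := by positivity
    linarith
  rw [ht0]
  have : ∑' n, eTerm b g (n + 1)
      = (b + g 0)⁻¹ * eE (b + g 0) (fun n => g (n + 1)) := by
    rw [show (fun n => eTerm b g (n+1)) = fun n => (b + g 0)⁻¹ * eTerm (b + g 0) (fun m => g (m + 1)) n from funext hshift, tsum_mul_left]
    rfl
  rw [this]; ring

lemma eE_lt_of_lex : ∀ (k : ℕ) (b : ℝ) (g h : ℕ → ℕ), 2 ≤ b →
    (∀ i, i < k → g i = h i) → g k < h k → eE b h < eE b g := by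
  intro k
  induction k with
  | zero =>
    intro b g h hb _ hk
    have hg0 : (0:ℝ) ≤ g 0 := by positivity
    have hgh : (g 0 : ℝ) + 1 ≤ h 0 := by exact_mod_cast hk
    have hB : 2 ≤ b + (h 0 : ℝ) := by linarith
    have hB0 : (0:ℝ) < b + h 0 := by linarith
    have hB1 : (0:ℝ) < b + h 0 - 1 := by linarith
    have hg0' : (0:ℝ) < b + g 0 := by linarith
    have h1 : eE b h ≤ (b + h 0)⁻¹ * (1 + (b + h 0 - 1)⁻¹) := by
      rw [eE_rec hb h]
      have := eE_le hB (fun n => h (n + 1))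
      have h2 : 0 < (b + (h 0:ℝ))⁻¹ := by positivity
      nlinarith [eE_pos hB (fun n => h (n+1))]
    have h2 : (b + (h 0:ℝ))⁻¹ * (1 + (b + h 0 - 1)⁻¹) = (b + h 0 - 1)⁻¹ := by
      field_simp
      ring
    have h3 : (b + (h 0:ℝ) - 1)⁻¹ ≤ (b + g 0)⁻¹ :=
      inv_anti₀ hg0' (by linarith)
    have h4 : (b + (g 0:ℝ))⁻¹ < eE b g := by
      rw [eE_rec hb g]
      have hB2 : 2 ≤ b + (g 0 : ℝ) := by linarith
      nlinarith [eE_pos hB2 (fun n => g (n+1)), inv_pos.2 hg0']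
    calc eE b h ≤ (b + h 0 - 1)⁻¹ := by rw [← h2]; exact h1
      _ ≤ (b + (g 0:ℝ))⁻¹ := h3
      _ < eE b g := h4
  | succ k ih =>
    intro b g h hb heq hk
    have h0 : g 0 = h 0 := heq 0 (Nat.succ_pos k)
    have hg0 : (0:ℝ) ≤ g 0 := by positivity
    have hB : 2 ≤ b + (g 0 : ℝ) := by linarith
    have hlt : eE (b + g 0) (fun n => h (n + 1)) < eE (b + g 0) (fun n => g (n + 1)) := by
      refine ih (b + g 0) _ _ hB (fun i hi => heq (i+1) (by omega)) hk
    rw [eE_rec hb g, eE_rec hb h, ← h0]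
    have hpos : (0:ℝ) < (b + (g 0:ℝ))⁻¹ := by positivity
    nlinarith

lemma eE_lt_iff (g c : ℕ → ℕ) :
    eE 2 g < eE 2 c ↔ ∃ k, (∀ i, i < k → g i = c i) ∧ c k < g k := by
  constructor
  · intro hlt
    by_cases hgc : g = c
    · exact absurd hlt (by rw [hgc]; exact lt_irrefl _)
    · have hex : ∃ n, g n ≠ c n := by
        by_contra hcon
        push_neg at hcon
        exact hgc (funext hcon)
      classical
      let k := Nat.find hex
      have hk : g k ≠ c k := Nat.find_spec hex
      have hmin : ∀ i, i < k → g i = c i := fun i hi =>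
        of_not_not (Nat.find_min hex hi)
      rcases lt_or_gt_of_ne hk with h | h
      · exact absurd (eE_lt_of_lex k 2 g c (by norm_num) hmin h) (by linarith)
      · exact ⟨k, hmin, h⟩
  · rintro ⟨k, heq, hk⟩
    exact eE_lt_of_lex k 2 c g (by norm_num) (fun i hi => (heq i hi).symm) hk


noncomputable def pP (u : ℕ → ℝ) (g : ℕ → ℕ) (k : ℕ) : ℝ :=
  ∏ i ∈ Finset.range k, u (g i)

noncomputable def fterm (u r : ℕ → ℝ) (g : ℕ → ℕ) (k : ℕ) : ℝ := r (g k) * pP u g k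

noncomputable def fS (u r : ℕ → ℝ) (g : ℕ → ℕ) : ℝ := ∑' k, fterm u r g k

section Fside

variable {u r : ℕ → ℝ}
  (hpos : ∀ n, 0 ≤ u n) (hlt1 : ∀ n, u n < 1)
  (hr : ∀ n, r n = 1 - ∑ i ∈ Finset.range (n + 1), u i)
  (hrpos : ∀ n, 0 < r n)

include hpos hr in
lemma r_le_one_sub (n : ℕ) : r n ≤ 1 - u n := by
  rw [hr]
  have : u n ≤ ∑ i ∈ Finset.range (n+1), u i :=
    Finset.single_le_sum (fun i _ => hpos i) (Finset.self_mem_range_succ n)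
  linarith

include hpos in
lemma pP_nonneg (g : ℕ → ℕ) (k : ℕ) : 0 ≤ pP u g k :=
  Finset.prod_nonneg fun i _ => hpos (g i)

include hpos hrpos in
lemma fterm_nonneg (g : ℕ → ℕ) (k : ℕ) : 0 ≤ fterm u r g k :=
  mul_nonneg (hrpos (g k)).le (pP_nonneg hpos g k)

include hpos hr in
lemma sum_fterm_le (g : ℕ → ℕ) (N : ℕ) :
    ∑ k ∈ Finset.range N, fterm u r g k ≤ 1 - pP u g N := by
  have h1 : ∀ k, fterm u r g k ≤ pP u g k - pP u g (k+1) := by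
    intro k
    have h2 : pP u g (k+1) = pP u g k * u (g k) := Finset.prod_range_succ _ _
    have h3 : r (g k) ≤ 1 - u (g k) := r_le_one_sub hpos hr (g k)
    have h4 : 0 ≤ pP u g k := pP_nonneg hpos g k
    calc fterm u r g k = r (g k) * pP u g k := rfl
      _ ≤ (1 - u (g k)) * pP u g k := mul_le_mul_of_nonneg_right h3 h4
      _ = pP u g k - pP u g (k+1) := by rw [h2]; ring
  calc ∑ k ∈ Finset.range N, fterm u r g k
      ≤ ∑ k ∈ Finset.range N, (pP u g k - pP u g (k+1)) :=
        Finset.sum_le_sum fun k _ => h1 k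
    _ = pP u g 0 - pP u g N := Finset.sum_range_sub' _ _
    _ = 1 - pP u g N := by unfold pP; simp

include hpos hr hrpos in
lemma fterm_summable (g : ℕ → ℕ) : Summable (fterm u r g) := by
  refine summable_of_sum_range_le (c := 1) (fterm_nonneg hpos hrpos g) fun n => ?_
  have := sum_fterm_le hpos hr g n
  have := pP_nonneg hpos g n
  linarith

include hpos hr hrpos in
lemma fS_le_one (g : ℕ → ℕ) : fS u r g ≤ 1 := by
  refine Real.tsum_le_of_sum_range_le (fterm_nonneg hpos hrpos g) fun n => ?_
  have := sum_fterm_le hpos hr g n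
  have := pP_nonneg hpos g n
  linarith

include hpos hr hrpos in
lemma r_le_fS (g : ℕ → ℕ) : r (g 0) ≤ fS u r g := by
  have h0 : fterm u r g 0 = r (g 0) := by unfold fterm pP; simp
  rw [← h0]
  exact Summable.le_tsum (fterm_summable hpos hr hrpos g) 0 fun j _ => fterm_nonneg hpos hrpos g j

include hpos hr hrpos in
lemma fS_pos (g : ℕ → ℕ) : 0 < fS u r g :=
  lt_of_lt_of_le (hrpos (g 0)) (r_le_fS hpos hr hrpos g)

include hpos hr hrpos in
lemma fS_rec (g : ℕ → ℕ) :
    fS u r g = r (g 0) + u (g 0) * fS u r (fun n => g (n + 1)) := by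
  rw [fS, Summable.tsum_eq_zero_add (fterm_summable hpos hr hrpos g)]
  have h0 : fterm u r g 0 = r (g 0) := by unfold fterm pP; simp
  have hsh : ∀ k, fterm u r g (k + 1) = u (g 0) * fterm u r (fun n => g (n + 1)) k := by
    intro k
    unfold fterm pP
    rw [Finset.prod_range_succ']
    ring
  rw [h0]
  congr 1
  rw [show (fun k => fterm u r g (k+1)) = fun k => u (g 0) * fterm u r (fun n => g (n+1)) k from funext hsh, tsum_mul_left]
  rfl

include hpos hr hrpos in
lemma fS_le (g : ℕ → ℕ) : fS u r g ≤ 1 - ∑ i ∈ Finset.range (g 0), u i := by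
  rw [fS_rec hpos hr hrpos g]
  have h1 : fS u r (fun n => g (n+1)) ≤ 1 := fS_le_one hpos hr hrpos _
  have h2 : 0 ≤ u (g 0) := hpos _
  have h3 : r (g 0) = 1 - ∑ i ∈ Finset.range (g 0 + 1), u i := hr _
  rw [Finset.sum_range_succ] at h3
  nlinarith

include hpos hr hrpos in
lemma fS_antitone_lex : ∀ (k : ℕ) (g h : ℕ → ℕ),
    (∀ i, i < k → g i = h i) → g k < h k → fS u r h ≤ fS u r g := by
  intro k
  induction k with
  | zero =>
    intro g h _ hk
    have h1 : fS u r h ≤ 1 - ∑ i ∈ Finset.range (h 0), u i := fS_le hpos hr hrpos h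
    have h2 : ∑ i ∈ Finset.range (g 0 + 1), u i ≤ ∑ i ∈ Finset.range (h 0), u i := by
      refine Finset.sum_le_sum_of_subset_of_nonneg ?_ fun i _ _ => hpos i
      exact Finset.range_subset_range.2 hk
    have h3 : r (g 0) ≤ fS u r g := r_le_fS hpos hr hrpos g
    rw [hr (g 0)] at h3
    linarith
  | succ k ih =>
    intro g h heq hk
    have h0 : g 0 = h 0 := heq 0 (Nat.succ_pos k)
    have hih : fS u r (fun n => h (n+1)) ≤ fS u r (fun n => g (n+1)) :=
      ih _ _ (fun i hi => heq (i+1) (by omega)) hk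
    rw [fS_rec hpos hr hrpos g, fS_rec hpos hr hrpos h, ← h0]
    have := hpos (g 0)
    nlinarith

include hpos hr hrpos in
lemma fSeries_eq_fS (g : ℕ → ℕ) : fSeries u r g = fS u r g := by
  rw [fS, Summable.tsum_eq_zero_add (fterm_summable hpos hr hrpos g), fSeries]
  have h0 : fterm u r g 0 = r (g 0) := by unfold fterm pP; simp
  rw [h0]
  rfl

include hpos hlt1 hr hrpos in
lemma fS_head_zeros : ∀ (k : ℕ) (g : ℕ → ℕ), (∀ i, i < k → g i = 0) →
    fS u r g = (1 - u 0 ^ k) + u 0 ^ k * fS u r (fun n => g (n + k)) := by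
  intro k
  induction k with
  | zero =>
    intro g _
    simp
  | succ k ih =>
    intro g hg
    have h0 : g 0 = 0 := hg 0 (Nat.succ_pos k)
    have hr0 : r 0 = 1 - u 0 := by rw [hr]; simp
    rw [fS_rec hpos hr hrpos g, h0, hr0,
      ih (fun n => g (n+1)) (fun i hi => hg (i+1) (by omega))]
    have : (fun n => g (n + k + 1)) = fun n => g (n + (k + 1)) := by
      funext n; congr 1
    rw [this]
    ring

include hpos hlt1 hr hrpos in
lemma fS_lt_one (hrlt : ∀ n, r n < 1) (g : ℕ → ℕ) (k : ℕ)
    (hg : ∀ i, i < k → g i = 0) (hgk : g k ≠ 0) : fS u r g < 1 := by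
  have hr0 : r 0 = 1 - u 0 := by rw [hr]; simp
  have hu0 : 0 < u 0 := by have := hrlt 0; rw [hr0] at this; linarith
  have hz := fS_head_zeros hpos hlt1 hr hrpos k g hg
  have htail : fS u r (fun n => g (n + k)) ≤ 1 - u 0 := by
    have h1 := fS_le hpos hr hrpos (fun n => g (n + k))
    have h2 : u 0 ≤ ∑ i ∈ Finset.range (g (0 + k)), u i := by
      refine Finset.single_le_sum (fun i _ => hpos i) ?_
      simp only [Finset.mem_range, Nat.zero_add]
      exact Nat.pos_of_ne_zero hgk
    linarith
  have hp : 0 < u 0 ^ k := pow_pos hu0 k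
  have hp1 : 0 < u 0 ^ (k+1) := pow_pos hu0 (k+1)
  rw [hz]
  nlinarith

end Fside

section Surj

variable {u r : ℕ → ℝ}
  (hpos : ∀ n, 0 ≤ u n) (hlt1 : ∀ n, u n < 1)
  (hr : ∀ n, r n = 1 - ∑ i ∈ Finset.range (n + 1), u i)
  (hrpos : ∀ n, 0 < r n)
  (hu_sum : HasSum u 1)

noncomputable def cfun (r : ℕ → ℝ) (s : ℝ) : ℕ := sInf {n | r n < s}

noncomputable def stepf (u r : ℕ → ℝ) (s : ℝ) : ℝ :=
  (s - r (cfun r s)) / u (cfun r s)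

include hr hu_sum in
lemma r_tendsto_zero : Filter.Tendsto r Filter.atTop (nhds 0) := by
  have h1 : Filter.Tendsto (fun n => ∑ i ∈ Finset.range n, u i) Filter.atTop (nhds 1) :=
    hu_sum.tendsto_sum_nat
  have h2 : Filter.Tendsto (fun n => ∑ i ∈ Finset.range (n + 1), u i) Filter.atTop (nhds 1) :=
    h1.comp (Filter.tendsto_add_atTop_nat 1)
  have h3 := (tendsto_const_nhds (x := (1:ℝ)) (f := Filter.atTop)).sub h2
  rw [sub_self] at h3
  exact h3.congr fun n => (hr n).symm

include hpos hr hrpos hu_sum in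
lemma stepf_spec {s : ℝ} (hs0 : 0 < s) (hs1 : s ≤ 1) :
    0 < u (cfun r s) ∧ 0 < stepf u r s ∧ stepf u r s ≤ 1 ∧
      s = r (cfun r s) + u (cfun r s) * stepf u r s := by
  have hne : {n | r n < s}.Nonempty := by
    obtain ⟨n, hn⟩ := ((r_tendsto_zero hr hu_sum).eventually (gt_mem_nhds hs0)).exists
    exact ⟨n, hn⟩
  have hmem : r (cfun r s) < s := Nat.sInf_mem hne
  have hub : s ≤ r (cfun r s) + u (cfun r s) := by
    rcases Nat.eq_zero_or_pos (cfun r s) with h0 | h0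
    · rw [h0]
      have : r 0 = 1 - u 0 := by rw [hr]; simp
      rw [this]; linarith
    · have hlt' : cfun r s - 1 < cfun r s := by omega
      have hnot : cfun r s - 1 ∉ {n | r n < s} :=
        Nat.notMem_of_lt_sInf (show cfun r s - 1 < sInf {n | r n < s} from hlt')
      simp only [Set.mem_setOf_eq, not_lt] at hnot
      have heq : r (cfun r s - 1) = r (cfun r s) + u (cfun r s) := by
        rw [hr, hr]
        have h1 : cfun r s - 1 + 1 = cfun r s := by omega
        rw [h1, Finset.sum_range_succ]
        ring
      linarith [heq ▸ hnot]
  have hu : 0 < u (cfun r s) := by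
    by_contra hcon
    push_neg at hcon
    linarith
  refine ⟨hu, ?_, ?_, ?_⟩
  · exact div_pos (by rw [sub_pos]; exact hmem) hu
  · rw [stepf, div_le_one hu]; linarith
  · rw [stepf]; field_simp; ring

include hpos hlt1 hr hrpos hu_sum in
lemma exists_fS_eq {t : ℝ} (ht0 : 0 < t) (ht1 : t ≤ 1) :
    ∃ c : ℕ → ℕ, fS u r c = t := by
  classical
  set T : ℕ → ℝ := fun k => (stepf u r)^[k] t with hT
  have hTsucc : ∀ k, T (k + 1) = stepf u r (T k) := fun k =>
    Function.iterate_succ_apply' (stepf u r) k t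
  have hT0 : T 0 = t := rfl
  have hTinv : ∀ k, 0 < T k ∧ T k ≤ 1 := by
    intro k
    induction k with
    | zero => exact ⟨ht0, ht1⟩
    | succ k ih =>
      obtain ⟨h1, h2, h3, _⟩ := stepf_spec hpos hr hrpos hu_sum ih.1 ih.2
      rw [hTsucc]
      exact ⟨h2, h3⟩
  set c : ℕ → ℕ := fun k => cfun r (T k) with hc
  have hkey : ∀ k, T k = r (c k) + u (c k) * T (k + 1) := by
    intro k
    obtain ⟨_, _, _, h4⟩ := stepf_spec hpos hr hrpos hu_sum (hTinv k).1 (hTinv k).2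
    rw [hTsucc]
    exact h4
  have hid : ∀ k, t = (∑ j ∈ Finset.range k, fterm u r c j) + pP u c k * T k := by
    intro k
    induction k with
    | zero => simp [pP, hT0]
    | succ k ih =>
      rw [Finset.sum_range_succ]
      have h1 : pP u c (k + 1) = pP u c k * u (c k) := Finset.prod_range_succ _ _
      have h2 : fterm u r c k = r (c k) * pP u c k := rfl
      rw [h1, h2]
      rw [ih, hkey k]
      ring
  -- bound on products
  obtain ⟨N, hN⟩ : ∃ N, ∀ n ≥ N, u n ≤ 1 / 2 := by
    have := hu_sum.summable.tendsto_atTop_zero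
    exact Filter.eventually_atTop.1 (this.eventually (eventually_le_nhds (by norm_num)))
  set Sf : Finset ℝ := insert (1/2 : ℝ) ((Finset.range N).image u) with hSf
  have hSfne : Sf.Nonempty := Finset.insert_nonempty _ _
  set M : ℝ := Sf.max' hSfne with hM
  have hM1 : M < 1 := by
    rw [hM, Finset.max'_lt_iff]
    intro x hx
    rw [hSf, Finset.mem_insert] at hx
    rcases hx with h | h
    · rw [h]; norm_num
    · obtain ⟨i, _, rfl⟩ := Finset.mem_image.1 h
      exact hlt1 i
  have hM0 : (0:ℝ) ≤ M := by
    have : (1/2 : ℝ) ∈ Sf := Finset.mem_insert_self _ _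
    have := Finset.le_max' Sf _ this
    linarith
  have hMu : ∀ n, u n ≤ M := by
    intro n
    by_cases hn : n < N
    · exact Finset.le_max' Sf _ (Finset.mem_insert_of_mem
        (Finset.mem_image.2 ⟨n, Finset.mem_range.2 hn, rfl⟩))
    · have := hN n (by omega)
      have h12 : (1/2:ℝ) ≤ M := Finset.le_max' Sf _ (Finset.mem_insert_self _ _)
      linarith
  have hpP : ∀ k, pP u c k ≤ M ^ k := by
    intro k
    calc pP u c k ≤ ∏ i ∈ Finset.range k, M :=
          Finset.prod_le_prod (fun i _ => hpos _) (fun i _ => hMu _)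
      _ = M ^ k := by rw [Finset.prod_const, Finset.card_range]
  have htend : Filter.Tendsto (fun k => pP u c k * T k) Filter.atTop (nhds 0) := by
    refine squeeze_zero (fun k => mul_nonneg (pP_nonneg hpos c k) (hTinv k).1.le)
      (fun k => ?_) (tendsto_pow_atTop_nhds_zero_of_lt_one hM0 hM1)
    calc pP u c k * T k ≤ pP u c k * 1 :=
          mul_le_mul_of_nonneg_left (hTinv k).2 (pP_nonneg hpos c k)
      _ ≤ M ^ k := by rw [mul_one]; exact hpP k
  have htend2 : Filter.Tendsto (fun k => ∑ j ∈ Finset.range k, fterm u r c j)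
      Filter.atTop (nhds t) := by
    have h1 : (fun k => ∑ j ∈ Finset.range k, fterm u r c j)
        = fun k => t - pP u c k * T k := by
      funext k
      have := hid k
      linarith
    rw [h1]
    have := (tendsto_const_nhds (x := t) (f := Filter.atTop (α := ℕ))).sub htend
    rwa [sub_zero] at this
  have htend3 := (fterm_summable hpos hr hrpos c).hasSum.tendsto_sum_nat
  exact ⟨c, tendsto_nhds_unique htend3 htend2⟩

end Surj

lemma fS_zero_seq {u r : ℕ → ℝ} (hpos : ∀ n, 0 ≤ u n) (hlt1 : ∀ n, u n < 1)
    (hr : ∀ n, r n = 1 - ∑ i ∈ Finset.range (n + 1), u i)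
    (hrpos : ∀ n, 0 < r n) : fS u r (fun _ => 0) = 1 := by
  have h := fS_rec hpos hr hrpos (fun _ => 0)
  have hr0 : r 0 = 1 - u 0 := by rw [hr]; simp
  have hne : u 0 ≠ 1 := ne_of_lt (hlt1 0)
  have : fS u r (fun _ => 0) * (1 - u 0) = 1 - u 0 := by
    rw [hr0] at h
    nlinarith [h]
  have h1 : (1 : ℝ) - u 0 ≠ 0 := by
    intro hcon
    exact hne (by linarith)
  have h2 : fS u r (fun _ => 0) * (1 - u 0) = 1 * (1 - u 0) := by rw [one_mul]; exact this
  exact mul_right_cancel₀ h1 h2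

lemma engelSum_zero_seq : engelSum (fun _ => 0) = 1 := by
  rw [engelSum_eq_eE]
  have h1 : ∀ n, eTerm 2 (fun _ => 0) n = 2⁻¹ * (2⁻¹ : ℝ) ^ n := by
    intro n
    unfold eTerm
    simp only [Nat.cast_zero, Finset.sum_const_zero, add_zero]
    rw [Finset.prod_const, Finset.card_range]
    ring
  rw [eE, show (fun n => eTerm 2 (fun _ => 0) n) = fun n => 2⁻¹ * (2⁻¹:ℝ) ^ n from funext h1,
    tsum_mul_left, tsum_geometric_of_lt_one (by norm_num) (by norm_num)]
  norm_num


/-- if all u_n ≥ 0 then f is a (continuous, non-decreasing)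
probability distribution function on [0,1], and it is the distribution function of
ξ = Δ^E_{η₁η₂…} for any i.i.d. sequence (η_k) with P(η_k = n) = u_n. -/
theorem stmt12
    (u r : ℕ → ℝ)
    (hu_sum : HasSum u 1)
    (hu_abs : ∀ n, |u n| < 1)
    (hr : ∀ n, r n = 1 - ∑ i ∈ Finset.range (n + 1), u i)
    (hr01 : ∀ n, 0 < r n ∧ r n < 1)
    (G : ℝ → ℕ → ℕ)
    (hG : ∀ x ∈ Set.Ioc (0:ℝ) 1, engelSum (G x) = x)
    (hGuniq : ∀ x ∈ Set.Ioc (0:ℝ) 1, ∀ g : ℕ → ℕ, engelSum g = x → g = G x)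
    (f : ℝ → ℝ)
    (hf : ∀ x ∈ Set.Ioc (0:ℝ) 1, f x = fSeries u r (G x))
    (hf0 : f 0 = 0)
    (hpos : ∀ n, 0 ≤ u n) :
    MonotoneOn f (Set.Icc (0:ℝ) 1) ∧ f 0 = 0 ∧ f 1 = 1 ∧
    ContinuousOn f (Set.Icc (0:ℝ) 1) ∧
    (∀ (Ω : Type) (mΩ : MeasurableSpace Ω) (μ : MeasureTheory.Measure Ω),
      MeasureTheory.IsProbabilityMeasure μ →
      ∀ η : ℕ → Ω → ℕ, (∀ k, Measurable (η k)) →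
      ProbabilityTheory.iIndepFun η μ →
      (∀ k n, μ {ω | η k ω = n} = ENNReal.ofReal (u n)) →
      ∀ x ∈ Set.Ioc (0:ℝ) 1,
        μ {ω | engelSum (fun n => η n ω) < x} = ENNReal.ofReal (f x)) := by
  classical
  have hlt1 : ∀ n, u n < 1 := fun n => lt_of_le_of_lt (le_abs_self _) (hu_abs n)
  have hrpos : ∀ n, 0 < r n := fun n => (hr01 n).1
  have hrlt : ∀ n, r n < 1 := fun n => (hr01 n).2
  have h1mem : (1:ℝ) ∈ Set.Ioc (0:ℝ) 1 := ⟨one_pos, le_refl 1⟩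
  have hfS : ∀ x ∈ Set.Ioc (0:ℝ) 1, f x = fS u r (G x) := fun x hx => by
    rw [hf x hx, fSeries_eq_fS hpos hr hrpos]
  -- f 1 = 1
  have hG1 : (fun _ => 0 : ℕ → ℕ) = G 1 := hGuniq 1 h1mem _ engelSum_zero_seq
  have hf1 : f 1 = 1 := by
    rw [hfS 1 h1mem, ← hG1, fS_zero_seq hpos hlt1 hr hrpos]
  -- f nonneg and positive on Ioc
  have hfpos : ∀ x ∈ Set.Ioc (0:ℝ) 1, 0 < f x := fun x hx => by
    rw [hfS x hx]; exact fS_pos hpos hr hrpos _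
  have hfnonneg : ∀ x ∈ Set.Icc (0:ℝ) 1, 0 ≤ f x := by
    intro x hx
    rcases eq_or_lt_of_le hx.1 with h0 | h0
    · rw [← h0, hf0]
    · exact (hfpos x ⟨h0, hx.2⟩).le
  -- monotonicity
  have hmono : MonotoneOn f (Set.Icc (0:ℝ) 1) := by
    intro x hx y hy hxy
    rcases eq_or_lt_of_le hxy with h | hlt
    · rw [h]
    rcases eq_or_lt_of_le hx.1 with h0 | h0
    · rw [← h0, hf0]
      exact hfnonneg y hy
    · have hx' : x ∈ Set.Ioc (0:ℝ) 1 := ⟨h0, hx.2⟩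
      have hy' : y ∈ Set.Ioc (0:ℝ) 1 := ⟨lt_trans h0 hlt, hy.2⟩
      rw [hfS x hx', hfS y hy']
      have hex : eE 2 (G x) < eE 2 (G y) := by
        rw [← engelSum_eq_eE, ← engelSum_eq_eE, hG x hx', hG y hy']
        exact hlt
      obtain ⟨k, heq, hk⟩ := (eE_lt_iff (G x) (G y)).1 hex
      exact fS_antitone_lex hpos hr hrpos k (G y) (G x) (fun i hi => (heq i hi).symm) hk
  -- surjectivity onto (0,1]
  have hsurj : ∀ t : ℝ, 0 < t → t ≤ 1 → ∃ x ∈ Set.Ioc (0:ℝ) 1, f x = t := by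
    intro t ht0 ht1
    obtain ⟨c, hc⟩ := exists_fS_eq hpos hlt1 hr hrpos hu_sum ht0 ht1
    have hmem : engelSum c ∈ Set.Ioc (0:ℝ) 1 := by
      rw [engelSum_eq_eE]
      refine ⟨eE_pos (le_refl 2) c, ?_⟩
      have := eE_le (le_refl 2) c
      norm_num at this
      exact this
    refine ⟨engelSum c, hmem, ?_⟩
    rw [hfS _ hmem, ← hGuniq _ hmem c rfl, hc]
  -- f < 1 strictly below 1
  have hflt1 : ∀ x ∈ Set.Icc (0:ℝ) 1, x < 1 → f x < 1 := by
    intro x hx hx1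
    rcases eq_or_lt_of_le hx.1 with h0 | h0
    · rw [← h0, hf0]; norm_num
    · have hx' : x ∈ Set.Ioc (0:ℝ) 1 := ⟨h0, hx.2⟩
      have hcne : G x ≠ (fun _ => 0 : ℕ → ℕ) := by
        intro hcon
        have := hG x hx'
        rw [hcon, engelSum_zero_seq] at this
        linarith
      have hex : ∃ n, G x n ≠ 0 := by
        by_contra hcon
        push_neg at hcon
        exact hcne (funext hcon)
      rw [hfS x hx']
      exact fS_lt_one hpos hlt1 hr hrpos hrlt (G x) (Nat.find hex)
        (fun i hi => of_not_not (Nat.find_min hex hi)) (Nat.find_spec hex)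
  -- continuity
  have hcont : ContinuousOn f (Set.Icc (0:ℝ) 1) := by
    intro a ha
    have hR : ContinuousWithinAt f (Set.Icc (0:ℝ) 1 ∩ Set.Ici a) a := by
      rcases lt_or_eq_of_le ha.2 with ha1 | ha1
      · have h := continuousWithinAt_right_of_monotoneOn_of_exists_between hmono
          (Icc_mem_nhdsGE_of_mem ⟨ha.1, ha1⟩) ?_
        · exact h.mono Set.inter_subset_right
        · intro b hb
          have hfa1 : f a < 1 := hflt1 a ha ha1
          have hfa0 : 0 ≤ f a := hfnonneg a ha
          obtain ⟨t, ht1, ht2⟩ := exists_between (lt_min hfa1 hb)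
          obtain ⟨cx, hcx, hfcx⟩ := hsurj t (lt_of_le_of_lt hfa0 ht1)
            (le_of_lt (lt_of_lt_of_le ht2 (min_le_left _ _)))
          exact ⟨cx, Set.Ioc_subset_Icc_self hcx,
            by rw [hfcx]; exact ⟨ht1, lt_of_lt_of_le ht2 (min_le_right _ _)⟩⟩
      · have hset1 : Set.Icc (0:ℝ) 1 ∩ Set.Ici a = {a} := by
          ext z
          simp only [Set.mem_inter_iff, Set.mem_Icc, Set.mem_Ici, Set.mem_singleton_iff]
          constructor
          · rintro ⟨⟨_, hz1⟩, hz2⟩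
            exact le_antisymm (by rw [ha1]; exact hz1) hz2
          · rintro rfl
            exact ⟨ha, le_refl _⟩
        rw [hset1]
        exact continuousWithinAt_singleton
    have hL : ContinuousWithinAt f (Set.Icc (0:ℝ) 1 ∩ Set.Iic a) a := by
      rcases lt_or_eq_of_le ha.1 with ha0 | ha0
      · have h := continuousWithinAt_left_of_monotoneOn_of_exists_between hmono
          (Icc_mem_nhdsLE_of_mem ⟨ha0, ha.2⟩) ?_
        · exact h.mono Set.inter_subset_right
        · intro b hb
          have hfa0 : 0 < f a := hfpos a ⟨ha0, ha.2⟩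
          obtain ⟨t, ht1, ht2⟩ := exists_between (max_lt hb hfa0)
          obtain ⟨cx, hcx, hfcx⟩ := hsurj t (lt_of_le_of_lt (le_max_right b 0) ht1)
            (le_of_lt (lt_of_lt_of_le ht2 ((hmono ha (Set.right_mem_Icc.2 zero_le_one) ha.2).trans_eq hf1)))
          exact ⟨cx, Set.Ioc_subset_Icc_self hcx,
            by rw [hfcx]; exact ⟨lt_of_le_of_lt (le_max_left b 0) ht1, ht2⟩⟩
      · have hset1 : Set.Icc (0:ℝ) 1 ∩ Set.Iic a = {a} := by
          ext z
          simp only [Set.mem_inter_iff, Set.mem_Icc, Set.mem_Iic, Set.mem_singleton_iff]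
          constructor
          · rintro ⟨⟨hz1, _⟩, hz2⟩
            exact le_antisymm hz2 (by rw [← ha0]; exact hz1)
          · rintro rfl
            exact ⟨ha, le_refl _⟩
        rw [hset1]
        exact continuousWithinAt_singleton
    have hsub : Set.Icc (0:ℝ) 1 ⊆ (Set.Icc (0:ℝ) 1 ∩ Set.Iic a) ∪ (Set.Icc (0:ℝ) 1 ∩ Set.Ici a) := by
      intro z hz
      rcases le_total z a with h | h
      · exact Or.inl ⟨hz, h⟩
      · exact Or.inr ⟨hz, h⟩
    exact (hL.union hR).mono hsub
  refine ⟨hmono, hf0, hf1, hcont, ?_⟩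
  -- measure-theoretic part
  intro Ω mΩ μ hprob η hηm hind hηd x hx
  set c := G x with hcdef
  have hcx : engelSum c = x := hG x hx
  set A : ℕ → Set Ω := fun k => ⋂ i ∈ Finset.range (k+1),
    (η i) ⁻¹' (if i = k then Set.Ioi (c k) else {c i}) with hA
  have hmemA : ∀ k ω, ω ∈ A k ↔ ((∀ i, i < k → η i ω = c i) ∧ c k < η k ω) := by
    intro k ω
    simp only [hA, Set.mem_iInter, Finset.mem_range, Set.mem_preimage]
    constructor
    · intro h
      refine ⟨fun i hi => ?_, ?_⟩
      · have := h i (by omega)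
        rw [if_neg (by omega)] at this
        simpa using this
      · have := h k (by omega)
        rw [if_pos rfl] at this
        simpa using this
    · rintro ⟨h1, h2⟩ i hi
      by_cases hik : i = k
      · subst hik
        rw [if_pos rfl]
        simpa using h2
      · rw [if_neg hik]
        simpa using h1 i (by omega)
  have hset : {ω | engelSum (fun n => η n ω) < x} = ⋃ k, A k := by
    ext ω
    simp only [Set.mem_setOf_eq, Set.mem_iUnion]
    rw [← hcx, engelSum_eq_eE, engelSum_eq_eE, eE_lt_iff]
    constructor
    · rintro ⟨k, h1, h2⟩
      exact ⟨k, (hmemA k ω).2 ⟨h1, h2⟩⟩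
    · rintro ⟨k, hk⟩
      obtain ⟨h1, h2⟩ := (hmemA k ω).1 hk
      exact ⟨k, h1, h2⟩
  have hAm : ∀ k, MeasurableSet (A k) := fun k =>
    Finset.measurableSet_biInter _ fun i _ => (hηm i) .of_discrete
  have hdisj' : ∀ k l, k < l → Disjoint (A k) (A l) := by
    intro k l hkl
    rw [Set.disjoint_left]
    intro ω hωk hωl
    have h1 := ((hmemA k ω).1 hωk).2
    have h2 := ((hmemA l ω).1 hωl).1 k hkl
    rw [h2] at h1
    exact lt_irrefl _ h1
  have hdisj : Pairwise (Function.onFun Disjoint A) := by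
    intro k l hkl
    rcases hkl.lt_or_gt with h | h
    · exact hdisj' k l h
    · exact (hdisj' l k h).symm
  -- measure of a tail event
  have hμIoi : ∀ k m, μ (η k ⁻¹' Set.Ioi m) = ENNReal.ofReal (r m) := by
    intro k m
    have hdec : η k ⁻¹' Set.Ioi m = ⋃ j : ℕ, η k ⁻¹' {m + 1 + j} := by
      ext ω
      simp only [Set.mem_preimage, Set.mem_Ioi, Set.mem_iUnion, Set.mem_singleton_iff]
      constructor
      · intro h
        exact ⟨η k ω - (m+1), by omega⟩
      · rintro ⟨j, hj⟩
        omega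
    have hdisj2 : Pairwise (Function.onFun Disjoint (fun j => η k ⁻¹' {m + 1 + j})) := by
      intro i j hij
      rw [Function.onFun, Set.disjoint_left]
      intro ω h1 h2
      simp only [Set.mem_preimage, Set.mem_singleton_iff] at h1 h2
      omega
    rw [hdec, MeasureTheory.measure_iUnion hdisj2 (fun j => (hηm k) .of_discrete)]
    have h1 : ∀ j : ℕ, μ (η k ⁻¹' {m + 1 + j}) = ENNReal.ofReal (u (m + 1 + j)) := by
      intro j
      rw [← hηd k (m+1+j)]
      congr 1
    rw [tsum_congr h1]
    have hsummable : Summable (fun j => u (m + 1 + j)) := by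
      refine ((summable_nat_add_iff (m+1)).2 hu_sum.summable).congr fun j => ?_
      congr 1
      omega
    rw [← ENNReal.ofReal_tsum_of_nonneg (fun j => hpos _) hsummable]
    congr 1
    have h2 := Summable.sum_add_tsum_nat_add (f := u) (m+1) hu_sum.summable
    have h3 : ∑' j : ℕ, u (m + 1 + j) = ∑' j : ℕ, u (j + (m+1)) :=
      tsum_congr fun j => by congr 1; omega
    rw [h3]
    rw [hu_sum.tsum_eq] at h2
    rw [hr]
    linarith
  -- measure of A k
  have hμA : ∀ k, μ (A k) = ENNReal.ofReal (fterm u r c k) := by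
    intro k
    rw [hA]
    rw [hind.meas_biInter (fun i _ =>
      ⟨(if i = k then Set.Ioi (c k) else {c i}), MeasurableSet.of_discrete, rfl⟩)]
    rw [Finset.prod_range_succ]
    have h2 : ∀ i ∈ Finset.range k,
        μ (η i ⁻¹' (if i = k then Set.Ioi (c k) else {c i})) = ENNReal.ofReal (u (c i)) := by
      intro i hi
      rw [Finset.mem_range] at hi
      rw [if_neg (by omega)]
      rw [← hηd i (c i)]
      congr 1
    rw [Finset.prod_congr rfl h2, if_pos rfl, hμIoi k (c k)]
    rw [← ENNReal.ofReal_prod_of_nonneg (fun i _ => hpos _)]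
    rw [← ENNReal.ofReal_mul (Finset.prod_nonneg (fun i _ => hpos _))]
    congr 1
    unfold fterm pP
    ring
  calc μ {ω | engelSum (fun n => η n ω) < x} = μ (⋃ k, A k) := by rw [hset]
    _ = ∑' k, μ (A k) := MeasureTheory.measure_iUnion hdisj hAm
    _ = ∑' k, ENNReal.ofReal (fterm u r c k) := tsum_congr hμA
    _ = ENNReal.ofReal (∑' k, fterm u r c k) :=
        (ENNReal.ofReal_tsum_of_nonneg (fterm_nonneg hpos hrpos c)
          (fterm_summable hpos hr hrpos c)).symm
    _ = ENNReal.ofReal (f x) := by rw [hfS x hx]; rfl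
end
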